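/- arXiv:1511.03971 — 3 statements merged into one kernel-verified Lean document; each statement's English description precedes it below -/
import Mathlib

section
/- Let 1 ≤ p < ∞, 1 ≤ q ≤ ∞, k ∈ ℕ, and let S be a measurable subset of [0,1)^d. If a sequence {f_j} ⊂ L_q([0,1)^d) converges to f in L_q([0,1)^d), then var_p^k(f;S;L_q) ≤ liminf_{j→∞} var_p^k(f_j;S;L_q). -/
open MeasureTheory ENNReal Filter

noncomputable section

/-- A (half-open, axis-parallel) cube `x + [0,l)^d` in `ℝ^d`. -/
def IsCube (d : ℕ) (Q : Set (Fin d → ℝ)) : Prop :=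
  ∃ (x : Fin d → ℝ) (l : ℝ), 0 < l ∧
    Q = Set.univ.pi fun i => Set.Ico (x i) (x i + l)

/-- The half-open unit cube `[0,1)^d`. -/
def unitCube (d : ℕ) : Set (Fin d → ℝ) :=
  Set.univ.pi fun _ => Set.Ico (0 : ℝ) 1

/-- Dyadic subcubes `2^{-j}([0,1)^d + α)` of the unit cube `[0,1)^d`. -/
def IsDyadicCube (d : ℕ) (Q : Set (Fin d → ℝ)) : Prop :=
  ∃ (j : ℕ) (α : Fin d → ℕ), (∀ i, α i < 2 ^ j) ∧
    Q = Set.univ.pi fun i => Set.Ico ((α i : ℝ) / 2 ^ j) (((α i : ℝ) + 1) / 2 ^ j)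

/-- `E_k(f;S;L_q)`: best `L_q(S)`-approximation of `f` by polynomials in `d`
variables of total degree at most `k-1`. -/
def Ek (d k : ℕ) (q : ℝ≥0∞) (f : (Fin d → ℝ) → ℝ) (S : Set (Fin d → ℝ)) : ℝ≥0∞ :=
  ⨅ (m : MvPolynomial (Fin d) ℝ) (_ : m.totalDegree ≤ k - 1),
    eLpNorm (fun x => f x - MvPolynomial.eval x m) q (volume.restrict S)

/-- The `(k,p)`-variation of `f` on `S`, computed in `L_q`: the supremum over all
finite disjoint families of cubes contained in `S` of `(Σ_Q E_k(f;Q;L_q)^p)^{1/p}`. -/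
def varpk (d k : ℕ) (p : ℝ) (q : ℝ≥0∞) (f : (Fin d → ℝ) → ℝ) (S : Set (Fin d → ℝ)) : ℝ≥0∞ :=
  ⨆ (Δ : Finset (Set (Fin d → ℝ)))
    (_ : ∀ Q ∈ Δ, IsCube d Q ∧ Q ⊆ S)
    (_ : (Δ : Set (Set (Fin d → ℝ))).PairwiseDisjoint id),
    (∑ Q ∈ Δ, Ek d k q f Q ^ p) ^ (1 / p)

/-- The piecewise polynomial `Σ_{Q ∈ Δ} P_Q · 1_Q`. -/
def piecewisePoly (d : ℕ) (Δ : Finset (Set (Fin d → ℝ)))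
    (P : Set (Fin d → ℝ) → MvPolynomial (Fin d) ℝ) : (Fin d → ℝ) → ℝ :=
  fun x => ∑ Q ∈ Δ, Q.indicator (fun y => MvPolynomial.eval y (P Q)) x

end

lemma Ek_triangle {d k : ℕ} {q : ℝ≥0∞} (hq : 1 ≤ q)
    {f g : (Fin d → ℝ) → ℝ} {Q : Set (Fin d → ℝ)}
    (hfm : AEStronglyMeasurable f (volume.restrict Q))
    (hgm : AEStronglyMeasurable g (volume.restrict Q)) :
    Ek d k q f Q ≤ eLpNorm (fun x => f x - g x) q (volume.restrict Q) + Ek d k q g Q := by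
  conv_rhs => rw [Ek]
  rw [ENNReal.add_iInf]
  refine le_iInf fun m => ?_
  rw [ENNReal.add_iInf]
  refine le_iInf fun hm => ?_
  have h1 : Ek d k q f Q ≤
      eLpNorm (fun x => f x - MvPolynomial.eval x m) q (volume.restrict Q) := iInf₂_le m hm
  refine h1.trans ?_
  have heq : (fun x => f x - MvPolynomial.eval x m) =
      (fun x => f x - g x) + (fun x => g x - MvPolynomial.eval x m) := by
    funext x; simp only [Pi.add_apply]; ring
  rw [heq]
  exact eLpNorm_add_le (hfm.sub hgm)
    (hgm.sub (MvPolynomial.continuous_eval m).aestronglyMeasurable) hq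

/-- Proposition 3.1, lower semicontinuity: if `f_j → f` in
`L_q([0,1)^d)` then `var_p^k(f;S;L_q) ≤ liminf_j var_p^k(f_j;S;L_q)`. -/
theorem statement8 (d k : ℕ) (p : ℝ) (q : ℝ≥0∞) (hp : 1 ≤ p) (hq : 1 ≤ q)
    (S : Set (Fin d → ℝ)) (hSmeas : MeasurableSet S) (hSsub : S ⊆ unitCube d)
    (f : (Fin d → ℝ) → ℝ) (F : ℕ → (Fin d → ℝ) → ℝ)
    (hF : ∀ j, MemLp (F j) q (volume.restrict (unitCube d)))
    (hf : MemLp f q (volume.restrict (unitCube d)))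
    (hconv : Tendsto
      (fun j => eLpNorm (fun x => F j x - f x) q (volume.restrict (unitCube d)))
      atTop (nhds 0)) :
    varpk d k p q f S ≤ liminf (fun j => varpk d k p q (F j) S) atTop := by
  have hp0 : (0:ℝ) < p := lt_of_lt_of_le one_pos hp
  rw [varpk]
  refine iSup₂_le fun Δ hΔ => iSup_le fun hdisj => ?_
  set A := (∑ Q ∈ Δ, Ek d k q f Q ^ p) ^ (1/p) with hA
  set ε : ℕ → ℝ≥0∞ :=
    fun j => eLpNorm (fun x => F j x - f x) q (volume.restrict (unitCube d)) with hε
  set c : ℝ≥0∞ := (Δ.card : ℝ≥0∞) ^ (1/p) with hc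
  have hcne : c ≠ ⊤ := by
    rw [hc]
    exact (ENNReal.rpow_lt_top_of_nonneg (by positivity) (by simp)).ne
  have hcε : Tendsto (fun j => c * ε j) atTop (nhds 0) := by
    have := ENNReal.Tendsto.const_mul (a := c) hconv (Or.inr hcne)
    simpa using this
  have key : ∀ j, A ≤ varpk d k p q (F j) S + c * ε j := by
    intro j
    have step1 : ∀ Q ∈ Δ, Ek d k q f Q ≤ ε j + Ek d k q (F j) Q := by
      intro Q hQ
      have hle : volume.restrict Q ≤ volume.restrict (unitCube d) :=
        Measure.restrict_mono ((hΔ Q hQ).2.trans hSsub) le_rfl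
      have h1 := Ek_triangle (k := k) hq (f := f) (g := F j) (Q := Q)
        (hf.aestronglyMeasurable.mono_measure hle)
        ((hF j).aestronglyMeasurable.mono_measure hle)
      refine h1.trans (add_le_add_left ?_ _)
      calc eLpNorm (fun x => f x - F j x) q (volume.restrict Q)
          ≤ eLpNorm (fun x => f x - F j x) q (volume.restrict (unitCube d)) :=
            eLpNorm_mono_measure _ hle
        _ = ε j := eLpNorm_sub_comm f (F j) q _
    have step2 : ((ε j) ^ p) ^ (1/p) = ε j := by
      rw [← ENNReal.rpow_mul, mul_one_div, div_self hp0.ne', ENNReal.rpow_one]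
    calc A ≤ (∑ Q ∈ Δ, (ε j + Ek d k q (F j) Q) ^ p) ^ (1/p) := by
          refine ENNReal.rpow_le_rpow ?_ (by positivity)
          exact Finset.sum_le_sum fun Q hQ => ENNReal.rpow_le_rpow (step1 Q hQ) hp0.le
      _ ≤ (∑ _Q ∈ Δ, (ε j) ^ p) ^ (1/p) + (∑ Q ∈ Δ, Ek d k q (F j) Q ^ p) ^ (1/p) :=
          ENNReal.Lp_add_le _ _ _ hp
      _ ≤ c * ε j + varpk d k p q (F j) S := by
          refine add_le_add ?_ ?_
          · rw [Finset.sum_const, nsmul_eq_mul,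
              ENNReal.mul_rpow_of_nonneg _ _ (by positivity), step2, hc]
          · rw [varpk]
            exact le_iSup₂_of_le Δ hΔ (le_iSup_of_le hdisj le_rfl)
      _ = varpk d k p q (F j) S + c * ε j := add_comm _ _
  refine ENNReal.le_of_forall_pos_le_add fun δ hδ _ => ?_
  have hev : ∀ᶠ j in atTop, A ≤ varpk d k p q (F j) S + δ := by
    filter_upwards [hcε.eventually_lt_const (show (0:ℝ≥0∞) < δ from ENNReal.coe_pos.2 hδ)]
      with j hj
    exact (key j).trans (add_le_add le_rfl hj.le)
  calc A ≤ liminf (fun j => varpk d k p q (F j) S + δ) atTop :=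
        le_liminf_of_le (by isBoundedDefault) hev
    _ = liminf (fun j => varpk d k p q (F j) S) atTop + δ :=
        liminf_add_const atTop _ _ isCobounded_ge_of_top isBounded_ge_of_bot
end

section
/- Let 1 ≤ p < ∞, 1 ≤ q ≤ ∞, k ∈ ℕ, d ∈ ℕ, and suppose s := d(1/p − 1/q) satisfies 0 < s ≤ k. Let f be a C^∞ function on ℝ^d. Then var_p^k(f;S;L_q) → 0 as |S| → 0, uniformly over sets S in the σ-algebra generated by the dyadic subcubes of [0,1)^d; indeed var_p^k(f;S;L_q) ≤ c(k,d) · |S|^{1/p} · max_{|α|=k} sup_{[0,1]^d} |D^α f| for all such S, where c(k,d) depends only on k and d. -/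
open MeasureTheory ENNReal Filter

noncomputable section

/-- The open unit cube `(0,1)^d`. -/
def openUnitCube (d : ℕ) : Set (Fin d → ℝ) :=
  Set.univ.pi fun _ => Set.Ioo (0 : ℝ) 1

/-- The partial derivative in the `i`-th coordinate direction. -/
def partialDeriv (d : ℕ) (i : Fin d) (φ : (Fin d → ℝ) → ℝ) : (Fin d → ℝ) → ℝ :=
  fun x => fderiv ℝ φ x (Pi.single i 1)

def partialDerivIter (d : ℕ) (i : Fin d) : ℕ → ((Fin d → ℝ) → ℝ) → ((Fin d → ℝ) → ℝ)
  | 0 => id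
  | n + 1 => fun φ => partialDeriv d i (partialDerivIter d i n φ)

/-- The mixed partial derivative `D^α = ∂^{α 0}_0 ⋯ ∂^{α (d-1)}_{d-1}`. -/
def multiDeriv (d : ℕ) (α : Fin d → ℕ) (φ : (Fin d → ℝ) → ℝ) : (Fin d → ℝ) → ℝ :=
  (List.finRange d).foldr (fun i ψ => partialDerivIter d i (α i) ψ) φ

end

namespace St9
variable {d : ℕ}

noncomputable def pdList (d : ℕ) (L : List (Fin d)) (φ : (Fin d → ℝ) → ℝ) : (Fin d → ℝ) → ℝ :=
  L.foldr (fun i ψ => partialDeriv d i ψ) φ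

variable {d : ℕ}

lemma contDiff_dirDeriv {f : (Fin d → ℝ) → ℝ} (hf : ContDiff ℝ (⊤:ℕ∞) f) (v : Fin d → ℝ) :
    ContDiff ℝ (⊤:ℕ∞) (fun y => fderiv ℝ f y v) :=
  (hf.fderiv_right (m := (⊤:ℕ∞)) (by simp)).clm_apply contDiff_const

lemma contDiff_partialDeriv {f : (Fin d → ℝ) → ℝ} (hf : ContDiff ℝ (⊤:ℕ∞) f) (i : Fin d) :
    ContDiff ℝ (⊤:ℕ∞) (partialDeriv d i f) := contDiff_dirDeriv hf _

lemma contDiff_pdList {f : (Fin d → ℝ) → ℝ} (hf : ContDiff ℝ (⊤:ℕ∞) f) (L : List (Fin d)) :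
    ContDiff ℝ (⊤:ℕ∞) (pdList d L f) := by
  induction L with
  | nil => exact hf
  | cons a L ih => exact contDiff_partialDeriv ih a

lemma iteratedFDeriv_snoc {f : (Fin d → ℝ) → ℝ} (hf : ContDiff ℝ (⊤:ℕ∞) f) {n : ℕ}
    (x : Fin d → ℝ) (m : Fin n → (Fin d → ℝ)) (v : Fin d → ℝ) :
    iteratedFDeriv ℝ (n + 1) f x (Fin.snoc m v) =
      iteratedFDeriv ℝ n (fun y => fderiv ℝ f y v) x m := by
  rw [iteratedFDeriv_succ_apply_right]
  rw [Fin.init_snoc, Fin.snoc_last]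
  have hfd : ContDiff ℝ (n : ℕ∞) (fderiv ℝ f) :=
    (hf.fderiv_right (m := (⊤:ℕ∞)) (by simp)).of_le (by exact_mod_cast le_top)
  have := (ContinuousLinearMap.apply ℝ ℝ v).iteratedFDeriv_comp_left (f := fderiv ℝ f) (hfd.contDiffAt (x := x))
    (by exact_mod_cast le_rfl)
  have h2 : (fun y => fderiv ℝ f y v) = (ContinuousLinearMap.apply ℝ ℝ v) ∘ (fderiv ℝ f) := rfl
  rw [h2, this]
  rfl

lemma fderiv_iteratedFDeriv_apply {f : (Fin d → ℝ) → ℝ} (hf : ContDiff ℝ (⊤:ℕ∞) f) {n : ℕ}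
    (x : Fin d → ℝ) (m : Fin n → (Fin d → ℝ)) (w : Fin d → ℝ) :
    fderiv ℝ (fun y => iteratedFDeriv ℝ n f y m) x w =
      iteratedFDeriv ℝ (n + 1) f x (Fin.cons w m) := by
  have hdiff : DifferentiableAt ℝ (iteratedFDeriv ℝ n f) x :=
    (hf.differentiable_iteratedFDeriv (by exact_mod_cast ENat.coe_lt_top n)) x
  have h2 : (fun y => iteratedFDeriv ℝ n f y m) =
      (ContinuousMultilinearMap.apply ℝ (fun _ : Fin n => (Fin d → ℝ)) ℝ m) ∘
        (iteratedFDeriv ℝ n f) := rfl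
  rw [h2]
  rw [fderiv_comp x (ContinuousLinearMap.differentiableAt _) hdiff]
  simp only [ContinuousLinearMap.coe_comp', Function.comp_apply,
    ContinuousLinearMap.fderiv]
  rw [iteratedFDeriv_succ_apply_left]
  simp [Fin.tail_cons]

lemma pdList_ofFn_eq {n : ℕ} {f : (Fin d → ℝ) → ℝ} (hf : ContDiff ℝ (⊤:ℕ∞) f)
    (r : Fin n → Fin d) (x : Fin d → ℝ) :
    pdList d (List.ofFn r) f x
      = iteratedFDeriv ℝ n f x (fun j => Pi.single (r j) (1 : ℝ)) := by
  induction n generalizing x with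
  | zero => simp [pdList, List.ofFn_zero]
  | succ n ih =>
    rw [List.ofFn_succ]
    have htail : pdList d (List.ofFn (fun j => r j.succ)) f
        = fun y => iteratedFDeriv ℝ n f y (fun j => Pi.single (r j.succ) (1 : ℝ)) :=
      funext fun y => ih (fun j => r j.succ) y
    show partialDeriv d (r 0) (pdList d (List.ofFn fun j => r j.succ) f) x = _
    rw [htail]
    unfold partialDeriv
    rw [fderiv_iteratedFDeriv_apply hf]
    congr 1
    funext j
    refine Fin.cases ?_ (fun j => ?_) j <;> simp

lemma partialDeriv_partialDeriv {φ : (Fin d → ℝ) → ℝ} (hφ : ContDiff ℝ (⊤:ℕ∞) φ) (a b : Fin d)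
    (x : Fin d → ℝ) :
    partialDeriv d a (partialDeriv d b φ) x
      = fderiv ℝ (fderiv ℝ φ) x (Pi.single a 1) (Pi.single b 1) := by
  have hd2 : DifferentiableAt ℝ (fderiv ℝ φ) x :=
    ((hφ.fderiv_right (m := (⊤:ℕ∞)) (by simp)).differentiable (by simp)) x
  show fderiv ℝ (fun y => fderiv ℝ φ y (Pi.single b 1)) x (Pi.single a 1) = _
  have h2 : (fun y => fderiv ℝ φ y (Pi.single b 1)) =
      (ContinuousLinearMap.apply ℝ ℝ (Pi.single b (1:ℝ))) ∘ (fderiv ℝ φ) := rfl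
  rw [h2, fderiv_comp x (ContinuousLinearMap.differentiableAt _) hd2]
  simp

lemma partialDeriv_comm {φ : (Fin d → ℝ) → ℝ} (hφ : ContDiff ℝ (⊤:ℕ∞) φ) (a b : Fin d) :
    partialDeriv d a (partialDeriv d b φ) = partialDeriv d b (partialDeriv d a φ) := by
  funext x
  rw [partialDeriv_partialDeriv hφ a b x, partialDeriv_partialDeriv hφ b a x]
  have hdφ : Differentiable ℝ φ := hφ.differentiable (by simp)
  have hd2 : DifferentiableAt ℝ (fderiv ℝ φ) x :=
    ((hφ.fderiv_right (m := (⊤:ℕ∞)) (by simp)).differentiable (by simp)) x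
  exact second_derivative_symmetric (fun y => (hdφ y).hasFDerivAt) hd2.hasFDerivAt _ _

lemma pdList_perm {f : (Fin d → ℝ) → ℝ} (hf : ContDiff ℝ (⊤:ℕ∞) f) {L₁ L₂ : List (Fin d)}
    (h : L₁.Perm L₂) : pdList d L₁ f = pdList d L₂ f := by
  induction h with
  | nil => rfl
  | cons a h ih => exact congrArg (partialDeriv d a) ih
  | swap a b L =>
    show partialDeriv d b (partialDeriv d a (pdList d L f))
        = partialDeriv d a (partialDeriv d b (pdList d L f))
    exact partialDeriv_comm (contDiff_pdList hf L) b a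
  | trans h1 h2 ih1 ih2 => rw [ih1, ih2]

lemma partialDerivIter_eq_pdList (i : Fin d) (n : ℕ) (φ : (Fin d → ℝ) → ℝ) :
    partialDerivIter d i n φ = pdList d (List.replicate n i) φ := by
  induction n with
  | zero => rfl
  | succ n ih => show partialDeriv d i _ = _; rw [ih]; rfl

lemma pdList_append (L₁ L₂ : List (Fin d)) (φ : (Fin d → ℝ) → ℝ) :
    pdList d (L₁ ++ L₂) φ = pdList d L₁ (pdList d L₂ φ) := by
  simp [pdList, List.foldr_append]

lemma multiDeriv_eq_pdList (α : Fin d → ℕ) (φ : (Fin d → ℝ) → ℝ) :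
    multiDeriv d α φ
      = pdList d ((List.finRange d).flatMap fun i => List.replicate (α i) i) φ := by
  show (List.finRange d).foldr _ φ = _
  generalize List.finRange d = L
  induction L with
  | nil => rfl
  | cons a L ih =>
    show partialDerivIter d a (α a) (List.foldr _ φ L) = _
    rw [ih, List.flatMap_cons, pdList_append, partialDerivIter_eq_pdList]

lemma count_flatMap_replicate (α : Fin d → ℕ) (j : Fin d) :
    ((List.finRange d).flatMap fun i => List.replicate (α i) i).count j = α j := by
  rw [List.count_flatMap]
  have : ∀ i : Fin d, (List.count j ∘ fun i => List.replicate (α i) i) i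
      = if j = i then α i else 0 := by
    intro i
    simp only [Function.comp_apply, List.count_replicate]
    by_cases h : i = j
    · simp [h]
    · have h' : ¬ j = i := fun hji => absurd hji.symm h
      simp [h, h']
  rw [List.map_congr_left (fun i _ => this i)]
  rw [← Fin.sum_univ_def]
  simp

lemma sum_count_ofFn {n : ℕ} (r : Fin n → Fin d) :
    (∑ j : Fin d, (List.ofFn r).count j) = n := by
  induction n with
  | zero => simp
  | succ n ih =>
    rw [List.ofFn_succ]
    have : ∀ j : Fin d, (List.ofFn fun i => r i.succ).count j + (if r 0 = j then 1 else 0)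
        = ((r 0 :: List.ofFn fun i => r i.succ) : List (Fin d)).count j := by
      intro j; rw [List.count_cons]; simp
    simp only [← this]
    rw [Finset.sum_add_distrib]
    rw [ih fun i => r i.succ]
    simp

/-- key: iterated derivative at basis tuple is a multiDeriv with |α| = n -/
lemma iteratedFDeriv_basis_eq_multiDeriv {n : ℕ} {f : (Fin d → ℝ) → ℝ}
    (hf : ContDiff ℝ (⊤:ℕ∞) f) (r : Fin n → Fin d) :
    ∃ α : Fin d → ℕ, (∑ i, α i) = n ∧ ∀ x,
      iteratedFDeriv ℝ n f x (fun j => Pi.single (r j) (1 : ℝ)) = multiDeriv d α f x := by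
  refine ⟨fun j => (List.ofFn r).count j, sum_count_ofFn r, fun x => ?_⟩
  rw [← pdList_ofFn_eq hf r x, multiDeriv_eq_pdList]
  have hperm : (List.ofFn r).Perm
      ((List.finRange d).flatMap fun i => List.replicate ((List.ofFn r).count i) i) := by
    rw [List.perm_iff_count]
    intro a
    rw [count_flatMap_replicate]
  rw [pdList_perm hf hperm]

lemma iteratedDeriv_line {n : ℕ} {f : (Fin d → ℝ) → ℝ} (hf : ContDiff ℝ (⊤:ℕ∞) f)
    (x₀ v : Fin d → ℝ) (t : ℝ) :
    iteratedDeriv n (fun s => f (x₀ + s • v)) t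
      = iteratedFDeriv ℝ n f (x₀ + t • v) (fun _ => v) := by
  induction n generalizing f with
  | zero => simp [iteratedDeriv_zero]
  | succ n ih =>
    rw [iteratedDeriv_succ']
    have hderiv : (deriv fun s : ℝ => f (x₀ + s • v)) = fun s : ℝ => fderiv ℝ f (x₀ + s • v) v := by
      funext s
      have hc : HasDerivAt (fun s : ℝ => x₀ + s • v) v s := by
        simpa using ((hasDerivAt_id s).smul_const v).const_add x₀
      have hF : HasFDerivAt f (fderiv ℝ f (x₀ + s • v)) (x₀ + s • v) :=
        ((hf.differentiable (by simp)) _).hasFDerivAt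
      exact (hF.comp_hasDerivAt s hc).deriv
    rw [hderiv, ih (contDiff_dirDeriv hf v)]
    rw [← iteratedFDeriv_snoc hf]
    congr 1
    funext j
    refine Fin.lastCases ?_ (fun j => ?_) j <;> simp

lemma single_expand (v : Fin d → ℝ) : v = ∑ i : Fin d, v i • (Pi.single i 1 : Fin d → ℝ) := by
  funext j
  rw [Finset.sum_apply]
  simp [Pi.single_apply]

lemma multilinear_expand {n : ℕ}
    (μ : ContinuousMultilinearMap ℝ (fun _ : Fin n => (Fin d → ℝ)) ℝ) (v : Fin d → ℝ) :
    μ (fun _ => v) = ∑ r : Fin n → Fin d,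
      (∏ j, v (r j)) • μ (fun j => Pi.single (r j) (1:ℝ)) := by
  conv_lhs => rw [single_expand v]
  rw [μ.map_sum (g := fun _ i => v i • (Pi.single i 1 : Fin d → ℝ))]
  refine Finset.sum_congr rfl fun r _ => ?_
  exact μ.toMultilinearMap.map_smul_univ (fun j => v (r j)) (fun j => Pi.single (r j) 1)

lemma iteratedDerivWithin_eq_iteratedDeriv' {g : ℝ → ℝ} (hg : ContDiff ℝ (⊤:ℕ∞) g) {s : Set ℝ}
    (hs : UniqueDiffOn ℝ s) {x : ℝ} (hx : x ∈ s) (n : ℕ) :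
    iteratedDerivWithin n g s x = iteratedDeriv n g x := by
  rw [iteratedDerivWithin_eq_iteratedFDerivWithin, iteratedDeriv_eq_iteratedFDeriv]
  congr 1
  exact ((((contDiff_iff_ftaylorSeries (n := (⊤ : ℕ∞))).mp hg).hasFTaylorSeriesUpToOn
    s).eq_iteratedFDerivWithin_of_uniqueDiffOn (by exact_mod_cast le_top) hs hx).symm


lemma local_poly_approx (k : ℕ) (hk : 1 ≤ k) {f : (Fin d → ℝ) → ℝ} (hf : ContDiff ℝ (⊤:ℕ∞) f)
    {M : ℝ} (hM0 : 0 ≤ M)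
    (hM : ∀ α : Fin d → ℕ, (∑ i, α i) = k →
      ∀ y ∈ Set.Icc (0 : Fin d → ℝ) 1, |multiDeriv d α f y| ≤ M)
    (x₀ : Fin d → ℝ) (l : ℝ) (hl : 0 < l)
    (hQ : Set.univ.pi (fun i => Set.Ico (x₀ i) (x₀ i + l)) ⊆ Set.Icc (0 : Fin d → ℝ) 1) :
    ∃ P : MvPolynomial (Fin d) ℝ, P.totalDegree ≤ k - 1 ∧
      ∀ x ∈ Set.univ.pi (fun i => Set.Ico (x₀ i) (x₀ i + l)),
        |f x - MvPolynomial.eval x P| ≤ (d:ℝ)^k * l^k * M := by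
  obtain ⟨k', rfl⟩ : ∃ k', k = k' + 1 := ⟨k - 1, (Nat.succ_pred_eq_of_pos hk).symm⟩
  classical
  set P : MvPolynomial (Fin d) ℝ := ∑ n ∈ Finset.range (k'+1), ∑ r : Fin n → Fin d,
      MvPolynomial.C ((n.factorial : ℝ)⁻¹ * iteratedFDeriv ℝ n f x₀ (fun j => Pi.single (r j) 1))
        * ∏ j : Fin n, (MvPolynomial.X (r j) - MvPolynomial.C (x₀ (r j))) with hP
  refine ⟨P, ?_, ?_⟩
  · refine le_trans (MvPolynomial.totalDegree_finset_sum _ _) ?_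
    apply Finset.sup_le
    intro n hn
    refine le_trans (MvPolynomial.totalDegree_finset_sum _ _) ?_
    apply Finset.sup_le
    intro r _
    refine le_trans (MvPolynomial.totalDegree_mul _ _) ?_
    rw [MvPolynomial.totalDegree_C]
    rw [zero_add]
    refine le_trans (MvPolynomial.totalDegree_finset_prod _ _) ?_
    have h1 : ∀ j : Fin n,
        (MvPolynomial.X (σ := Fin d) (R := ℝ) (r j) - MvPolynomial.C (x₀ (r j))).totalDegree ≤ 1 := by
      intro j
      refine le_trans (MvPolynomial.totalDegree_sub _ _) ?_
      simp [MvPolynomial.totalDegree_X, MvPolynomial.totalDegree_C]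
    refine le_trans (Finset.sum_le_sum (fun j _ => h1 j)) ?_
    simp only [Finset.sum_const, Finset.card_univ, Fintype.card_fin, smul_eq_mul, mul_one]
    have := Finset.mem_range.mp hn
    omega
  · intro x hx
    set v : Fin d → ℝ := x - x₀ with hv
    have hvmem : ∀ i, 0 ≤ v i ∧ v i < l := by
      intro i
      have h := hx i (Set.mem_univ i)
      refine ⟨by simp [hv]; linarith [h.1], by simp [hv]; linarith [h.2]⟩
    have hseg : ∀ t ∈ Set.Icc (0:ℝ) 1, x₀ + t • v ∈ Set.Icc (0 : Fin d → ℝ) 1 := by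
      intro t ht
      apply hQ
      intro i _
      have h1 := (hvmem i).1; have h2 := (hvmem i).2
      refine ⟨?_, ?_⟩ <;> simp only [Pi.add_apply, Pi.smul_apply, smul_eq_mul] <;>
        nlinarith [ht.1, ht.2]
    set g : ℝ → ℝ := fun t => f (x₀ + t • v) with hg
    have hgsmooth : ContDiff ℝ (⊤:ℕ∞) g :=
      hf.comp (contDiff_const.add (contDiff_id.smul contDiff_const))
    have hDbound : ∀ y ∈ Set.Icc (0 : Fin d → ℝ) 1,
        |iteratedFDeriv ℝ (k'+1) f y (fun _ => v)| ≤ (d:ℝ)^(k'+1) * l^(k'+1) * M := by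
      intro y hy
      rw [multilinear_expand]
      refine le_trans (Finset.abs_sum_le_sum_abs _ _) ?_
      have hterm : ∀ r : Fin (k'+1) → Fin d,
          |(∏ j, v (r j)) • iteratedFDeriv ℝ (k'+1) f y (fun j => Pi.single (r j) (1:ℝ))|
            ≤ l^(k'+1) * M := by
        intro r
        rw [smul_eq_mul, abs_mul]
        obtain ⟨α, hαsum, hα⟩ := iteratedFDeriv_basis_eq_multiDeriv hf r
        have h1 : |∏ j, v (r j)| ≤ l^(k'+1) := by
          rw [Finset.abs_prod]
          calc (∏ j : Fin (k'+1), |v (r j)|)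
              ≤ ∏ _j : Fin (k'+1), l :=
                Finset.prod_le_prod (fun j _ => abs_nonneg _) (fun j _ => by
                  rw [abs_of_nonneg (hvmem (r j)).1]; exact le_of_lt (hvmem (r j)).2)
            _ = l^(k'+1) := by simp
        have h2 : |iteratedFDeriv ℝ (k'+1) f y (fun j => Pi.single (r j) (1:ℝ))| ≤ M := by
          rw [hα y]; exact hM α hαsum y hy
        exact mul_le_mul h1 h2 (abs_nonneg _) (pow_nonneg hl.le _)
      refine le_trans (Finset.sum_le_sum fun r _ => hterm r) ?_
      rw [Finset.sum_const]
      have hcard : (Finset.univ : Finset (Fin (k'+1) → Fin d)).card = d^(k'+1) := by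
        simp [Fintype.card_fun]
      rw [hcard, nsmul_eq_mul, mul_assoc]
      push_cast
      rfl
    have hC : ∀ y ∈ Set.Icc (0:ℝ) 1,
        ‖iteratedDerivWithin (k'+1) g (Set.Icc 0 1) y‖ ≤ (d:ℝ)^(k'+1) * l^(k'+1) * M := by
      intro y hy
      rw [iteratedDerivWithin_eq_iteratedDeriv' hgsmooth (uniqueDiffOn_Icc one_pos) hy]
      rw [Real.norm_eq_abs]
      have : iteratedDeriv (k'+1) g y = iteratedFDeriv ℝ (k'+1) f (x₀ + y • v) (fun _ => v) :=
        iteratedDeriv_line hf x₀ v y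
      rw [this]
      exact hDbound _ (hseg y hy)
    have htaylor := taylor_mean_remainder_bound (f := g) (a := 0) (b := 1) (n := k')
      zero_le_one ((hgsmooth.of_le (by exact_mod_cast le_top)).contDiffOn)
      (Set.right_mem_Icc.mpr zero_le_one) hC
    have heval : MvPolynomial.eval x P = ∑ n ∈ Finset.range (k'+1),
        ((n.factorial:ℝ)⁻¹) * iteratedFDeriv ℝ n f x₀ (fun _ => v) := by
      rw [hP, map_sum]
      refine Finset.sum_congr rfl fun n _ => ?_
      rw [map_sum, multilinear_expand (iteratedFDeriv ℝ n f x₀) v, Finset.mul_sum]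
      refine Finset.sum_congr rfl fun r _ => ?_
      rw [map_mul, MvPolynomial.eval_C, map_prod]
      have hvrj : ∀ j : Fin n, MvPolynomial.eval x
          (MvPolynomial.X (r j) - MvPolynomial.C (x₀ (r j))) = v (r j) := by
        intro j; simp [hv]
      rw [Finset.prod_congr rfl fun j _ => hvrj j]
      rw [smul_eq_mul]
      ring
    have hTE : taylorWithinEval g k' (Set.Icc 0 1) 0 1 = MvPolynomial.eval x P := by
      rw [taylor_within_apply, heval]
      refine Finset.sum_congr rfl fun n hn => ?_
      rw [iteratedDerivWithin_eq_iteratedDeriv' hgsmooth (uniqueDiffOn_Icc one_pos)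
        (Set.left_mem_Icc.mpr zero_le_one)]
      have : iteratedDeriv n g 0 = iteratedFDeriv ℝ n f (x₀ + (0:ℝ) • v) (fun _ => v) :=
        iteratedDeriv_line hf x₀ v 0
      rw [this]
      simp [smul_eq_mul]
    have hg1 : g 1 = f x := by
      show f (x₀ + (1:ℝ) • v) = f x
      congr 1
      simp [hv]
    calc |f x - MvPolynomial.eval x P|
        = ‖g 1 - taylorWithinEval g k' (Set.Icc 0 1) 0 1‖ := by
          rw [hg1, hTE, Real.norm_eq_abs]
      _ ≤ ((d:ℝ)^(k'+1) * l^(k'+1) * M) * (1 - 0)^(k'+1) / k'.factorial := htaylor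
      _ ≤ (d:ℝ)^(k'+1) * l^(k'+1) * M := by
          rw [sub_zero, one_pow, mul_one]
          have h1 : (1:ℝ) ≤ k'.factorial := by exact_mod_cast k'.factorial_pos
          have hC0 : 0 ≤ (d:ℝ)^(k'+1) * l^(k'+1) * M := by positivity
          exact div_le_self hC0 h1


end St9

open St9 in
/-- Proposition 3.2: for a `C^∞` function `f` and a space
`V_{pq}^k` of smoothness `s = d(1/p - 1/q) ∈ (0,k]`, one has
`var_p^k(f;S;L_q) ≤ c(k,d) |S|^{1/p} max_{|α|=k} sup_{[0,1]^d} |D^α f|` for every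
set `S` in the σ-algebra generated by the dyadic subcubes of `[0,1)^d`; in
particular `var_p^k(f;S;L_q) → 0` as `|S| → 0`, uniformly in `S`. -/
theorem statement9 (d k : ℕ) (hk : 1 ≤ k) :
    ∃ c : ℝ, 0 < c ∧
      ∀ (p : ℝ) (q : ℝ≥0∞) (s : ℝ), 1 ≤ p → 1 ≤ q →
        s = d * (1 / p - (q⁻¹).toReal) → 0 < s → s ≤ k →
        ∀ f : (Fin d → ℝ) → ℝ, ContDiff ℝ (⊤ : ℕ∞) f →
        ∀ S : Set (Fin d → ℝ),
          MeasurableSet[MeasurableSpace.generateFrom {Q | IsDyadicCube d Q}] S →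
          S ⊆ unitCube d →
          varpk d k p q f S ≤
            ENNReal.ofReal c * volume S ^ (1 / p) *
              ⨆ (α : Fin d → ℕ) (_ : (∑ i, α i) = k),
                ⨆ x ∈ Set.Icc (0 : Fin d → ℝ) 1, (‖multiDeriv d α f x‖₊ : ℝ≥0∞) := by
  classical
  refine ⟨(d:ℝ)^k + 1, by positivity, ?_⟩
  intro p q s hp hq hs hs0 hsk f hf S hSmeas hSsub
  have hp0 : (0:ℝ) < p := lt_of_lt_of_le one_pos hp
  have hd : 1 ≤ d := by
    rcases Nat.eq_zero_or_pos d with h0 | h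
    · subst h0; rw [hs] at hs0; norm_num at hs0
    · exact h
  set M' : ℝ≥0∞ := ⨆ (α : Fin d → ℕ) (_ : (∑ i, α i) = k),
      ⨆ x ∈ Set.Icc (0 : Fin d → ℝ) 1, (‖multiDeriv d α f x‖₊ : ℝ≥0∞) with hM'def
  show varpk d k p q f S ≤ ENNReal.ofReal ((d:ℝ)^k + 1) * volume S ^ (1 / p) * M'
  have hunit : unitCube d ⊆ Set.Icc (0 : Fin d → ℝ) 1 := by
    intro y hy
    exact ⟨fun i => (hy i trivial).1, fun i => le_of_lt (hy i trivial).2⟩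
  have hvu : volume (unitCube d) = 1 := by
    rw [unitCube, volume_pi_pi]; simp [Real.volume_Ico]
  have hStop : volume S ≠ ⊤ := by
    refine ne_top_of_le_ne_top ?_ (measure_mono hSsub)
    rw [hvu]; exact ENNReal.one_ne_top
  refine iSup_le fun Δ => iSup_le fun hΔ => iSup_le fun hdisj => ?_
  by_cases hS0 : volume S = 0
  · have hΔe : Δ = ∅ := by
      refine Finset.eq_empty_of_forall_notMem fun Q hQmem => ?_
      obtain ⟨⟨x₀, l, hl, rfl⟩, hQS⟩ := hΔ Q hQmem
      have hle : volume (Set.univ.pi fun i => Set.Ico (x₀ i) (x₀ i + l)) ≤ volume S :=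
        measure_mono hQS
      rw [hS0] at hle
      have hv : volume (Set.univ.pi fun i => Set.Ico (x₀ i) (x₀ i + l))
          = ENNReal.ofReal l ^ d := by
        rw [volume_pi_pi]
        simp [Real.volume_Ico]
      rw [hv] at hle
      have : ENNReal.ofReal l ^ d ≠ 0 := pow_ne_zero _ (ENNReal.ofReal_pos.2 hl).ne'
      exact this (le_antisymm hle zero_le)
    subst hΔe
    simp only [Finset.sum_empty]
    rw [ENNReal.zero_rpow_of_pos (by positivity)]
    exact zero_le
  by_cases hM'top : M' = ⊤
  · have : ENNReal.ofReal ((d:ℝ)^k + 1) * volume S ^ (1 / p) * M' = ⊤ := by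
      rw [hM'top, ENNReal.mul_top]
      refine mul_ne_zero ?_ ?_
      · simp [ENNReal.ofReal_eq_zero]; positivity
      · rw [ne_eq, ENNReal.rpow_eq_zero_iff]
        rintro (⟨h1, _⟩ | ⟨h1, _⟩)
        · exact hS0 h1
        · exact hStop h1
    rw [this]; exact le_top
  set M : ℝ := M'.toReal with hMdef
  have hM0 : 0 ≤ M := ENNReal.toReal_nonneg
  have hM : ∀ α : Fin d → ℕ, (∑ i, α i) = k →
      ∀ y ∈ Set.Icc (0 : Fin d → ℝ) 1, |multiDeriv d α f y| ≤ M := by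
    intro α hα y hy
    have h1 : (‖multiDeriv d α f y‖₊ : ℝ≥0∞) ≤ M' := by
      rw [hM'def]
      refine le_iSup_of_le α ?_
      refine le_iSup_of_le hα ?_
      refine le_iSup_of_le y ?_
      exact le_iSup_of_le hy le_rfl
    calc |multiDeriv d α f y| = ((‖multiDeriv d α f y‖₊ : ℝ≥0∞)).toReal := by
          simp [Real.norm_eq_abs]
      _ ≤ M := ENNReal.toReal_mono hM'top h1
  set A : ℝ≥0∞ := ENNReal.ofReal ((d:ℝ)^k) with hAdef
  have key : ∀ Q ∈ Δ, Ek d k q f Q ^ p ≤ (A * M') ^ p * volume Q := by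
    intro Q hQmem
    obtain ⟨⟨x₀, l, hl, rfl⟩, hQS⟩ := hΔ Q hQmem
    set Q := Set.univ.pi fun i => Set.Ico (x₀ i) (x₀ i + l) with hQdef
    have hQIcc : Q ⊆ Set.Icc (0 : Fin d → ℝ) 1 := fun y hy => hunit (hSsub (hQS hy))
    obtain ⟨P, hPdeg, hPbound⟩ := local_poly_approx k hk hf hM0 hM x₀ l hl hQIcc
    have hQm : MeasurableSet Q := MeasurableSet.univ_pi fun i => measurableSet_Ico
    set t : ℝ≥0∞ := ENNReal.ofReal l with htdef
    have ht0 : t ≠ 0 := by rw [htdef]; exact (ENNReal.ofReal_pos.2 hl).ne'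
    have httop : t ≠ ⊤ := ENNReal.ofReal_ne_top
    have hvolQ : volume Q = t ^ d := by
      rw [hQdef, volume_pi_pi]
      simp [Real.volume_Ico]
      rfl
    have hl1 : l ≤ 1 := by
      by_contra hcon
      push_neg at hcon
      have h1 : volume Q ≤ volume (unitCube d) := measure_mono fun y hy => hSsub (hQS hy)
      have h2 : volume (unitCube d) = 1 := by
        rw [unitCube, volume_pi_pi]; simp [Real.volume_Ico]
      rw [hvolQ, h2, htdef, ← ENNReal.ofReal_pow hl.le, ← ENNReal.ofReal_one,
        ENNReal.ofReal_le_ofReal_iff zero_le_one] at h1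
      have h3 : (1:ℝ) < l ^ d := one_lt_pow₀ hcon (by omega)
      linarith
    have ht1 : t ≤ 1 := by
      rw [htdef, ← ENNReal.ofReal_one]
      exact ENNReal.ofReal_le_ofReal hl1
    have hEk : Ek d k q f Q ≤ volume Q ^ q.toReal⁻¹ *
        ENNReal.ofReal ((d:ℝ)^k * l^k * M) := by
      have h0 : Ek d k q f Q ≤
          eLpNorm (fun x => f x - MvPolynomial.eval x P) q (volume.restrict Q) :=
        iInf₂_le P hPdeg
      refine h0.trans ?_
      have hb : ∀ᵐ x ∂(volume.restrict Q),
          ‖f x - MvPolynomial.eval x P‖ ≤ (d:ℝ)^k * l^k * M := by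
        rw [ae_restrict_iff' hQm]
        exact ae_of_all _ fun x hx => by rw [Real.norm_eq_abs]; exact hPbound x hx
      refine (eLpNorm_le_of_ae_bound hb).trans ?_
      rw [Measure.restrict_apply_univ]
    have hofReal : ENNReal.ofReal ((d:ℝ)^k * l^k * M) = A * t ^ (k:ℝ) * M' := by
      rw [ENNReal.ofReal_mul (by positivity), ENNReal.ofReal_mul (by positivity)]
      rw [← hAdef, ENNReal.ofReal_pow hl.le, ← htdef, ENNReal.rpow_natCast,
        hMdef, ENNReal.ofReal_toReal hM'top]
    have hvolQpow : volume Q ^ q.toReal⁻¹ = t ^ ((d:ℝ) * q.toReal⁻¹) := by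
      rw [hvolQ, ← ENNReal.rpow_natCast t d, ← ENNReal.rpow_mul]
    have hEk2 : Ek d k q f Q ≤ A * M' * t ^ ((k:ℝ) + (d:ℝ) * q.toReal⁻¹) := by
      refine hEk.trans ?_
      rw [hofReal, hvolQpow, ENNReal.rpow_add _ _ ht0 httop]
      ring_nf
      exact le_of_eq (by ring)
    have hexp : (d:ℝ) ≤ ((k:ℝ) + (d:ℝ) * q.toReal⁻¹) * p := by
      have hqi : (q⁻¹).toReal = q.toReal⁻¹ := ENNReal.toReal_inv q
      have h1 : (d:ℝ) * (1/p - q.toReal⁻¹) ≤ k := by rw [← hqi, ← hs]; exact hsk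
      have h2 : (d:ℝ) * (1/p) ≤ (k:ℝ) + (d:ℝ) * q.toReal⁻¹ := by linarith
      have h3 := mul_le_mul_of_nonneg_right h2 hp0.le
      have h4 : (d:ℝ) * (1/p) * p = d := by field_simp
      linarith
    calc Ek d k q f Q ^ p ≤ (A * M' * t ^ ((k:ℝ) + (d:ℝ) * q.toReal⁻¹)) ^ p :=
          ENNReal.rpow_le_rpow hEk2 hp0.le
      _ = (A * M') ^ p * t ^ (((k:ℝ) + (d:ℝ) * q.toReal⁻¹) * p) := by
          rw [ENNReal.mul_rpow_of_nonneg _ _ hp0.le, ← ENNReal.rpow_mul]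
      _ ≤ (A * M') ^ p * t ^ (d:ℝ) := by
          exact mul_le_mul_right (ENNReal.rpow_le_rpow_of_exponent_ge ht1 hexp) _
      _ = (A * M') ^ p * volume Q := by rw [hvolQ, ENNReal.rpow_natCast]
  have hsum : (∑ Q ∈ Δ, Ek d k q f Q ^ p) ≤ (A * M') ^ p * volume S := by
    calc (∑ Q ∈ Δ, Ek d k q f Q ^ p) ≤ ∑ Q ∈ Δ, (A * M') ^ p * volume Q :=
          Finset.sum_le_sum key
      _ = (A * M') ^ p * ∑ Q ∈ Δ, volume Q := by rw [Finset.mul_sum]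
      _ = (A * M') ^ p * volume (⋃ Q ∈ Δ, Q) := by
          congr 1
          refine (measure_biUnion_finset hdisj fun Q hQmem => ?_).symm
          obtain ⟨⟨x₀, l, hl, rfl⟩, _⟩ := hΔ Q hQmem
          exact MeasurableSet.univ_pi fun i => measurableSet_Ico
      _ ≤ (A * M') ^ p * volume S := by
          refine mul_le_mul_right (measure_mono ?_) _
          exact Set.iUnion₂_subset fun Q hQmem => (hΔ Q hQmem).2
  calc (∑ Q ∈ Δ, Ek d k q f Q ^ p) ^ (1/p)
      ≤ ((A * M') ^ p * volume S) ^ (1/p) := ENNReal.rpow_le_rpow hsum (by positivity)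
    _ = (A * M') * volume S ^ (1/p) := by
        rw [ENNReal.mul_rpow_of_nonneg _ _ (by positivity), ← ENNReal.rpow_mul,
          mul_one_div_cancel (ne_of_gt hp0), ENNReal.rpow_one]
    _ ≤ ENNReal.ofReal ((d:ℝ)^k + 1) * volume S ^ (1 / p) * M' := by
        have hA : A ≤ ENNReal.ofReal ((d:ℝ)^k + 1) :=
          ENNReal.ofReal_le_ofReal (by linarith)
        calc A * M' * volume S ^ (1/p) = A * volume S ^ (1/p) * M' := by ring
          _ ≤ ENNReal.ofReal ((d:ℝ)^k + 1) * volume S ^ (1 / p) * M' := by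
              exact mul_le_mul_left (mul_le_mul_left hA _) _
end

section
/- Let W be a weight on the σ-algebra generated by the dyadic subcubes of [0,1)^d (i.e. Σ_i W(S_i) ≤ W(∪_i S_i) for disjoint families, W(S) → 0 as |S| → 0, and W([0,1)^d) = 1), and let N ∈ ℕ. Then the set G_N := {Q dyadic : W(Q) ≥ 1/N} is finite, and there exists a partition B of G_N∖{[0,1)^d} into paths in the dyadic tree (chains T_B = Q_1 ⊂ Q_2 ⊂ … ⊂ Q_n = H_B in which each Q_i is a son of Q_{i+1}) such that W(H_B∖T_B) < 1/N for every B ∈ B, and card B ≤ 3N + 1. -/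
open MeasureTheory ENNReal Filter

noncomputable section

/-- The σ-algebra on `ℝ^d` generated by the dyadic subcubes of `[0,1)^d`. -/
def dyadicSigma (d : ℕ) : MeasurableSpace (Fin d → ℝ) :=
  MeasurableSpace.generateFrom {Q | IsDyadicCube d Q}

/-- A weight: a `[0,∞]`-valued set function on the σ-algebra generated by the
dyadic subcubes of `[0,1)^d` which is superadditive over countable disjoint
unions, absolutely continuous (`W(S) → 0` as `|S| → 0`), and normalized by
`W([0,1)^d) = 1`. -/
def IsWeight (d : ℕ) (W : Set (Fin d → ℝ) → ℝ≥0∞) : Prop :=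
  (∀ S : ℕ → Set (Fin d → ℝ),
      (∀ i, MeasurableSet[dyadicSigma d] (S i)) →
      Pairwise (Function.onFun Disjoint S) →
      ∑' i, W (S i) ≤ W (⋃ i, S i)) ∧
  (∀ ε : ℝ≥0∞, 0 < ε → ∃ δ : ℝ≥0∞, 0 < δ ∧
      ∀ S : Set (Fin d → ℝ), MeasurableSet[dyadicSigma d] S →
        MeasureTheory.volume S < δ → W S < ε) ∧
  W (unitCube d) = 1

/-- The set `G_N` of "bad" dyadic cubes: those with `W(Q) ≥ 1/N`. -/
def GN (d N : ℕ) (W : Set (Fin d → ℝ) → ℝ≥0∞) : Set (Set (Fin d → ℝ)) :=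
  {Q | IsDyadicCube d Q ∧ ((N : ℝ≥0∞))⁻¹ ≤ W Q}

/-- The complement `G_N^c` of `G_N` within the dyadic cubes. -/
def GNc (d N : ℕ) (W : Set (Fin d → ℝ) → ℝ≥0∞) : Set (Set (Fin d → ℝ)) :=
  {Q | IsDyadicCube d Q ∧ W Q < ((N : ℝ≥0∞))⁻¹}

/-- The boundary `∂G_N`: the maximal (for inclusion) cubes of `G_N^c`. -/
def bdryGN (d N : ℕ) (W : Set (Fin d → ℝ) → ℝ≥0∞) : Set (Set (Fin d → ℝ)) :=
  {Q ∈ GNc d N W | ∀ Q' ∈ GNc d N W, Q ⊆ Q' → Q = Q'}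

end

noncomputable section

/-- The path in the dyadic tree joining the dyadic cube `T` (tail) to the dyadic
cube `H` (head): the set of all dyadic cubes `Q` with `T ⊆ Q ⊆ H`. -/
def dyadicPath (d : ℕ) (T H : Set (Fin d → ℝ)) : Set (Set (Fin d → ℝ)) :=
  {Q | IsDyadicCube d Q ∧ T ⊆ Q ∧ Q ⊆ H}

end

section Geom

namespace St16

variable {d : ℕ}

/-- concrete dyadic cube -/
def dcube (d j : ℕ) (α : Fin d → ℕ) : Set (Fin d → ℝ) :=
  Set.univ.pi fun i => Set.Ico ((α i : ℝ) / 2 ^ j) (((α i : ℝ) + 1) / 2 ^ j)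

lemma isDyadic_dcube {j : ℕ} {α : Fin d → ℕ} (hα : ∀ i, α i < 2 ^ j) :
    IsDyadicCube d (dcube d j α) := ⟨j, α, hα, rfl⟩

lemma isDyadic_iff {Q : Set (Fin d → ℝ)} :
    IsDyadicCube d Q ↔ ∃ j α, (∀ i, α i < 2 ^ j) ∧ Q = dcube d j α := Iff.rfl

lemma mem_dcube {j : ℕ} {α : Fin d → ℕ} {x : Fin d → ℝ} :
    x ∈ dcube d j α ↔ ∀ i, (α i : ℝ) / 2 ^ j ≤ x i ∧ x i < ((α i : ℝ) + 1) / 2 ^ j := by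
  simp [dcube, Set.mem_pi, Set.mem_Ico]

lemma dcube_nonempty {j : ℕ} {α : Fin d → ℕ} : (dcube d j α).Nonempty := by
  refine ⟨fun i => (α i : ℝ) / 2 ^ j, mem_dcube.2 fun i => ⟨le_refl _, ?_⟩⟩
  have h2j : (0:ℝ) < 2 ^ j := by positivity
  exact div_lt_div_of_pos_right (by linarith) h2j

lemma unitCube_eq : unitCube d = dcube d 0 (fun _ => 0) := by
  simp [unitCube, dcube]

lemma dcube_subset_unitCube {j : ℕ} {α : Fin d → ℕ} (hα : ∀ i, α i < 2 ^ j) :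
    dcube d j α ⊆ unitCube d := by
  intro x hx
  rw [mem_dcube] at hx
  intro i _
  rcases hx i with ⟨h1, h2⟩
  have h2j : (0:ℝ) < 2 ^ j := by positivity
  constructor
  · exact le_trans (by positivity) h1
  · have : ((α i : ℝ) + 1) / 2 ^ j ≤ 1 := by
      rw [div_le_one h2j]
      have := hα i
      exact_mod_cast Nat.succ_le_of_lt this
    exact lt_of_lt_of_le h2 this

end St16
end Geom
section Geom2
namespace St16
variable {d : ℕ}

lemma dcube_proj {j : ℕ} {α : Fin d → ℕ} (i : Fin d) :
    Function.eval i '' dcube d j α = Set.Ico ((α i : ℝ) / 2 ^ j) (((α i : ℝ) + 1) / 2 ^ j) :=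
  Set.eval_image_pi (Set.mem_univ i) dcube_nonempty

lemma dcube_endpoints {j k : ℕ} {α β : Fin d → ℕ}
    (h : dcube d j α = dcube d k β) (i : Fin d) :
    (α i : ℝ) / 2 ^ j = (β i : ℝ) / 2 ^ k ∧
      ((α i : ℝ) + 1) / 2 ^ j = ((β i : ℝ) + 1) / 2 ^ k := by
  have hh := congrArg (Function.eval i '' ·) h
  simp only [dcube_proj] at hh
  have h2j : (0:ℝ) < 2 ^ j := by positivity
  have hlt : (α i : ℝ) / 2 ^ j < ((α i : ℝ) + 1) / 2 ^ j :=
    div_lt_div_of_pos_right (by linarith) h2j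
  exact (Set.Ico_eq_Ico_iff (Or.inl hlt)).1 hh

/-- the cube determines its level and position (needs d ≥ 1) -/
lemma dcube_inj (hd : 1 ≤ d) {j k : ℕ} {α β : Fin d → ℕ}
    (h : dcube d j α = dcube d k β) : j = k ∧ α = β := by
  have h2j : (0:ℝ) < 2 ^ j := by positivity
  have h2k : (0:ℝ) < 2 ^ k := by positivity
  have i0 : Fin d := ⟨0, hd⟩
  obtain ⟨h1, h2⟩ := dcube_endpoints h i0
  rw [div_eq_div_iff (ne_of_gt h2j) (ne_of_gt h2k)] at h1 h2
  have hpow : (2:ℝ) ^ k = 2 ^ j := by nlinarith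
  have hjk : j = k := by
    have : ((2^k : ℕ) : ℝ) = ((2^j : ℕ) : ℝ) := by push_cast; exact hpow
    exact (Nat.pow_right_injective (le_refl 2) (Nat.cast_injective this)).symm
  subst hjk
  refine ⟨rfl, funext fun i => ?_⟩
  obtain ⟨h1, _⟩ := dcube_endpoints h i
  field_simp at h1
  exact_mod_cast h1

/-- 1-D laminarity -/
lemma Ico_dyadic_laminar {j k a b : ℕ} (hjk : j ≤ k)
    (hne : (Set.Ico ((a:ℝ)/2^j) ((a+1)/2^j) ∩ Set.Ico ((b:ℝ)/2^k) ((b+1)/2^k)).Nonempty) :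
    Set.Ico ((b:ℝ)/2^k) (((b:ℝ)+1)/2^k) ⊆ Set.Ico ((a:ℝ)/2^j) (((a:ℝ)+1)/2^j) := by
  obtain ⟨x, ⟨hx1, hx2⟩, ⟨hx3, hx4⟩⟩ := hne
  have h2j : (0:ℝ) < 2 ^ j := by positivity
  have h2k : (0:ℝ) < 2 ^ k := by positivity
  set t : ℕ := 2 ^ (k - j) with ht
  have htt : (2:ℝ) ^ k = 2 ^ j * t := by
    rw [ht]; push_cast; rw [← pow_add]; congr 1; omega
  -- key: a * t ≤ b and b + 1 ≤ (a+1) * t, in ℕ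
  have hab1 : a * t ≤ b := by
    by_contra hc
    push_neg at hc
    -- b + 1 ≤ a * t, so (b+1)/2^k ≤ a/2^j, contradicting x in both
    have : ((b:ℝ) + 1) ≤ (a * t : ℕ) := by exact_mod_cast hc
    have hle : ((b:ℝ) + 1) / 2 ^ k ≤ (a:ℝ) / 2 ^ j := by
      rw [div_le_div_iff₀ h2k h2j, htt]; push_cast at this ⊢; nlinarith
    linarith [lt_of_lt_of_le hx4 (le_trans hle hx1)]
  have hab2 : b + 1 ≤ (a + 1) * t := by
    by_contra hc
    push_neg at hc
    -- (a+1) * t ≤ b, so (a+1)/2^j ≤ b/2^k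
    have : ((a:ℝ) + 1) * t ≤ (b:ℝ) := by
      have : (a+1) * t ≤ b := by omega
      exact_mod_cast this
    have hle : ((a:ℝ) + 1) / 2 ^ j ≤ (b:ℝ) / 2 ^ k := by
      rw [div_le_div_iff₀ h2j h2k, htt]; nlinarith
    linarith [lt_of_lt_of_le hx2 (le_trans hle hx3)]
  rintro y ⟨hy1, hy2⟩
  have htpos : (0:ℝ) < t := by rw [ht]; positivity
  constructor
  · calc (a:ℝ)/2^j = (a * t : ℕ) / 2^k := by push_cast; rw [htt]; field_simp
    _ ≤ (b:ℝ)/2^k := by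
        have : ((a*t : ℕ) : ℝ) ≤ (b:ℝ) := by exact_mod_cast hab1
        exact by gcongr
    _ ≤ y := hy1
  · calc y < ((b:ℝ)+1)/2^k := hy2
    _ ≤ ((a:ℝ)+1)/2^j := by
        rw [div_le_div_iff₀ h2k h2j, htt]
        have : ((b:ℝ)+1) ≤ ((a+1)*t : ℕ) := by exact_mod_cast hab2
        push_cast at this ⊢; nlinarith

end St16
end Geom2
section Geom3
namespace St16
variable {d : ℕ}

/-- d-dim laminarity: the finer cube is inside the coarser one if they meet -/
lemma dcube_laminar {j k : ℕ} {α β : Fin d → ℕ} (hjk : j ≤ k)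
    (hne : (dcube d j α ∩ dcube d k β).Nonempty) :
    dcube d k β ⊆ dcube d j α := by
  obtain ⟨x, hx1, hx2⟩ := hne
  rw [mem_dcube] at hx1 hx2
  intro y hy
  rw [mem_dcube] at hy ⊢
  intro i
  have := Ico_dyadic_laminar (a := α i) (b := β i) hjk
    ⟨x i, ⟨(hx1 i).1, (hx1 i).2⟩, ⟨(hx2 i).1, (hx2 i).2⟩⟩ ⟨(hy i).1, (hy i).2⟩
  exact this

/-- comparable levels from subset -/
lemma level_le_of_subset (hd : 1 ≤ d) {j k : ℕ} {α β : Fin d → ℕ}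
    (h : dcube d j α ⊆ dcube d k β) : k ≤ j := by
  by_contra hc
  push_neg at hc
  have hsub : dcube d k β ⊆ dcube d j α := by
    apply dcube_laminar (le_of_lt hc)
    obtain ⟨x, hx⟩ := dcube_nonempty (j := j) (α := α) (d := d)
    exact ⟨x, hx, h hx⟩
  have heq : dcube d j α = dcube d k β := le_antisymm h hsub
  exact absurd (dcube_inj hd heq).1 (by omega)

lemma level_lt_of_ssubset (hd : 1 ≤ d) {j k : ℕ} {α β : Fin d → ℕ}
    (h : dcube d j α ⊂ dcube d k β) : k < j := by
  have hle := level_le_of_subset hd h.subset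
  rcases lt_or_eq_of_le hle with h' | h'
  · exact h'
  · subst h'
    -- same level, subset and nonempty: must be equal, contradiction with ssubset
    exfalso
    have : dcube d k β ⊆ dcube d k α := by
      apply dcube_laminar (le_refl k)
      obtain ⟨x, hx⟩ := dcube_nonempty (j := k) (α := α) (d := d)
      exact ⟨x, hx, h.subset hx⟩
    exact h.ne (le_antisymm h.subset this)

/-- unit cube is dyadic -/
lemma isDyadic_unitCube : IsDyadicCube d (unitCube d) := by
  rw [unitCube_eq]; exact isDyadic_dcube (by simp)

/-- every level-0 dyadic cube is the unit cube -/
lemma dcube_zero_eq_unit {α : Fin d → ℕ} (hα : ∀ i, α i < 2 ^ 0) :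
    dcube d 0 α = unitCube d := by
  have : α = fun _ => 0 := funext fun i => by have := hα i; omega
  rw [unitCube_eq, this]

/-- parent of a dyadic cube at level j+1 -/
lemma parent_mem {j : ℕ} {α : Fin d → ℕ} (hα : ∀ i, α i < 2 ^ (j+1)) :
    (∀ i, α i / 2 < 2 ^ j) ∧ dcube d (j+1) α ⊆ dcube d j (fun i => α i / 2) := by
  constructor
  · intro i; have := hα i; omega
  · intro x hx
    rw [mem_dcube] at hx ⊢
    intro i
    obtain ⟨h1, h2⟩ := hx i
    have h2j : (0:ℝ) < 2 ^ j := by positivity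
    have hee : (2:ℝ) ^ (j+1) = 2 ^ j * 2 := by ring
    constructor
    · refine le_trans ?_ h1
      rw [div_le_div_iff₀ h2j (by positivity), hee]
      have : (α i / 2) * 2 ≤ α i := by omega
      have : ((α i / 2 : ℕ) : ℝ) * 2 ≤ (α i : ℝ) := by exact_mod_cast this
      nlinarith
    · refine lt_of_lt_of_le h2 ?_
      rw [div_le_div_iff₀ (by positivity) h2j, hee]
      have : α i + 1 ≤ (α i / 2 + 1) * 2 := by omega
      have : ((α i : ℝ) + 1) ≤ (((α i / 2 : ℕ) : ℝ) + 1) * 2 := by exact_mod_cast this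
      nlinarith

/-- ancestors at every coarser level -/
lemma exists_ancestor {k : ℕ} : ∀ (m : ℕ) (α : Fin d → ℕ), (∀ i, α i < 2 ^ (k + m)) →
    ∃ β : Fin d → ℕ, (∀ i, β i < 2 ^ k) ∧ dcube d (k + m) α ⊆ dcube d k β := by
  intro m
  induction m with
  | zero => exact fun α hα => ⟨α, hα, le_refl _⟩
  | succ m ih =>
    intro α hα
    have hα' : ∀ i, α i < 2 ^ ((k + m) + 1) := by
      intro i; have := hα i; rwa [show k + (m+1) = (k+m)+1 by omega] at this
    obtain ⟨hb, hsub⟩ := parent_mem hα'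
    obtain ⟨β, hβ, hsub2⟩ := ih (fun i => α i / 2) hb
    exact ⟨β, hβ, le_trans (by exact_mod_cast hsub) hsub2⟩

end St16
end Geom3
section Geom4
namespace St16
variable {d : ℕ}

lemma dyadic_nonempty {Q : Set (Fin d → ℝ)} (h : IsDyadicCube d Q) : Q.Nonempty := by
  obtain ⟨j, α, hα, rfl⟩ := h; exact dcube_nonempty

lemma dyadic_subset_unit {Q : Set (Fin d → ℝ)} (h : IsDyadicCube d Q) : Q ⊆ unitCube d := by
  obtain ⟨j, α, hα, rfl⟩ := h; exact dcube_subset_unitCube hα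

lemma dyadic_laminar {P Q : Set (Fin d → ℝ)} (hP : IsDyadicCube d P) (hQ : IsDyadicCube d Q)
    (hne : (P ∩ Q).Nonempty) : P ⊆ Q ∨ Q ⊆ P := by
  obtain ⟨j, α, hα, rfl⟩ := hP
  obtain ⟨k, β, hβ, rfl⟩ := hQ
  rcases le_total j k with h | h
  · exact Or.inr (dcube_laminar h hne)
  · exact Or.inl (dcube_laminar h (by rwa [Set.inter_comm] at hne))

/-- parent: minimal strict dyadic super-cube -/
lemma exists_parent (hd : 1 ≤ d) {Q : Set (Fin d → ℝ)} (hQ : IsDyadicCube d Q)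
    (hne : Q ≠ unitCube d) :
    ∃ P, IsDyadicCube d P ∧ Q ⊂ P ∧ ∀ Q', IsDyadicCube d Q' → Q ⊂ Q' → P ⊆ Q' := by
  obtain ⟨j, α, hα, rfl⟩ := hQ
  cases j with
  | zero => exact absurd (dcube_zero_eq_unit hα) hne
  | succ j =>
    obtain ⟨hb, hsub⟩ := parent_mem hα
    refine ⟨dcube d j (fun i => α i / 2), isDyadic_dcube hb, ?_, ?_⟩
    · refine ssubset_of_subset_of_ne hsub fun heq => ?_
      exact absurd (dcube_inj hd heq).1 (by omega)
    · rintro Q' ⟨k, β, hβ, rfl⟩ hss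
      have hk : k < j + 1 := level_lt_of_ssubset hd hss
      apply dcube_laminar (by omega)
      obtain ⟨x, hx⟩ := dcube_nonempty (d := d) (j := j+1) (α := α)
      exact ⟨x, hss.subset hx, hsub hx⟩

/-- level-1 ancestor: largest proper dyadic sub-cube of the unit cube above Q -/
lemma exists_anc1 (hd : 1 ≤ d) {Q : Set (Fin d → ℝ)} (hQ : IsDyadicCube d Q)
    (hne : Q ≠ unitCube d) :
    ∃ H, IsDyadicCube d H ∧ Q ⊆ H ∧ H ≠ unitCube d ∧
      ∀ Q', IsDyadicCube d Q' → Q ⊆ Q' → Q' = unitCube d ∨ Q' ⊆ H := by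
  obtain ⟨j, α, hα, rfl⟩ := hQ
  cases j with
  | zero => exact absurd (dcube_zero_eq_unit hα) hne
  | succ j =>
    have hα' : ∀ i, α i < 2 ^ (1 + j) := by
      intro i; have := hα i; rwa [show j + 1 = 1 + j by omega] at this
    obtain ⟨β, hβ, hsub⟩ := exists_ancestor (d := d) (k := 1) j α hα'
    have hsub' : dcube d (j+1) α ⊆ dcube d 1 β := by
      rwa [show 1 + j = j + 1 by omega] at hsub
    refine ⟨dcube d 1 β, isDyadic_dcube hβ, hsub', ?_, ?_⟩
    · intro heq
      rw [unitCube_eq] at heq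
      exact absurd (dcube_inj hd heq).1 (by omega)
    · rintro Q' ⟨k, γ, hγ, rfl⟩ hss
      cases k with
      | zero => exact Or.inl (dcube_zero_eq_unit hγ)
      | succ k =>
        refine Or.inr (dcube_laminar (by omega) ?_)
        obtain ⟨x, hx⟩ := dcube_nonempty (d := d) (j := j+1) (α := α)
        exact ⟨x, hsub' hx, hss hx⟩

lemma dyadicPath_self {T : Set (Fin d → ℝ)} (hT : IsDyadicCube d T) :
    dyadicPath d T T = {T} := by
  ext Q
  simp only [dyadicPath, Set.mem_setOf_eq, Set.mem_singleton_iff]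
  exact ⟨fun ⟨_, h1, h2⟩ => le_antisymm h2 h1, fun h => by subst h; exact ⟨hT, le_refl _, le_refl _⟩⟩

lemma mem_dyadicPath_self {T H : Set (Fin d → ℝ)} (hT : IsDyadicCube d T) (hTH : T ⊆ H) :
    T ∈ dyadicPath d T H := ⟨hT, le_refl _, hTH⟩

end St16
end Geom4
section Wsec
namespace St16
variable {d : ℕ} {W : Set (Fin d → ℝ) → ℝ≥0∞}

abbrev dmeas (d : ℕ) (S : Set (Fin d → ℝ)) : Prop := MeasurableSet[dyadicSigma d] S

lemma dmeas_of_dyadic {Q : Set (Fin d → ℝ)} (h : IsDyadicCube d Q) : dmeas d Q :=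
  MeasurableSpace.measurableSet_generateFrom h

lemma dmeas_unit : dmeas d (unitCube d) := dmeas_of_dyadic isDyadic_unitCube

lemma W_empty (hW : IsWeight d W) : W ∅ = 0 := by
  by_contra h
  obtain ⟨δ, hδ, hε⟩ := hW.2.1 (W ∅) (pos_iff_ne_zero.2 h)
  exact absurd (hε ∅ (dyadicSigma d).measurableSet_empty (by simpa using hδ)) (lt_irrefl _)

lemma W_superadd_two (hW : IsWeight d W) {A B : Set (Fin d → ℝ)}
    (hA : dmeas d A) (hB : dmeas d B) (hAB : Disjoint A B) :
    W A + W B ≤ W (A ∪ B) := by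
  classical
  set S : ℕ → Set (Fin d → ℝ) := fun i => if i = 0 then A else if i = 1 then B else ∅ with hS
  have hmeas : ∀ i, dmeas d (S i) := by
    intro i; rw [hS]; dsimp only
    split_ifs <;> first | exact hA | exact hB | exact (dyadicSigma d).measurableSet_empty
  have hdisj : Pairwise (Function.onFun Disjoint S) := by
    intro i j hij
    rw [hS]; dsimp only [Function.onFun]
    split_ifs <;> first | omega | exact hAB | exact hAB.symm | simp
  have hU : (⋃ i, S i) = A ∪ B := by
    apply Set.Subset.antisymm
    · intro x hx
      obtain ⟨i, hi⟩ := Set.mem_iUnion.1 hx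
      rw [hS] at hi; dsimp only at hi
      split_ifs at hi with h1 h2
      · exact Or.inl hi
      · exact Or.inr hi
      · exact absurd hi (Set.notMem_empty x)
    · rintro x (hx | hx)
      · exact Set.mem_iUnion.2 ⟨0, by simp [hS, hx]⟩
      · exact Set.mem_iUnion.2 ⟨1, by simp [hS, hx]⟩
  calc W A + W B = ∑ i ∈ Finset.range 2, W (S i) := by
        rw [Finset.sum_range_succ, Finset.sum_range_one]; simp [hS]
  _ ≤ ∑' i, W (S i) := ENNReal.sum_le_tsum _
  _ ≤ W (⋃ i, S i) := hW.1 S hmeas hdisj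
  _ = W (A ∪ B) := by rw [hU]

lemma W_mono (hW : IsWeight d W) {A B : Set (Fin d → ℝ)}
    (hA : dmeas d A) (hB : dmeas d B) (hsub : A ⊆ B) : W A ≤ W B := by
  have := W_superadd_two hW hA (hB.diff hA) disjoint_sdiff_self_right
  rw [Set.union_diff_cancel hsub] at this
  exact le_trans le_self_add this

lemma W_superadd_list (hW : IsWeight d W) :
    ∀ (l : List (Set (Fin d → ℝ))), (∀ s ∈ l, dmeas d s) →
      l.Pairwise Disjoint → (l.map W).sum ≤ W (⋃ s ∈ l, s) := by
  intro l
  induction l with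
  | nil => intro _ _; simp [W_empty hW]
  | cons a l ih =>
    intro hm hp
    have hma : dmeas d a := hm a (List.mem_cons_self)
    have hml : ∀ s ∈ l, dmeas d s := fun s hs => hm s (List.mem_cons_of_mem a hs)
    have hmu : dmeas d (⋃ s ∈ l, s) := by
      have : (⋃ s ∈ l, s) = ⋃ s ∈ {x | x ∈ l}, s := rfl
      rw [this]
      exact MeasurableSet.biUnion (l.finite_toSet.countable) (fun s hs => hml s hs)
    have hdis : Disjoint a (⋃ s ∈ l, s) := by
      rw [Set.disjoint_iUnion_right]
      intro s
      rw [Set.disjoint_iUnion_right]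
      intro hs
      exact (List.pairwise_cons.1 hp).1 s hs
    calc (List.map W (a :: l)).sum = W a + (l.map W).sum := by simp
    _ ≤ W a + W (⋃ s ∈ l, s) := add_le_add_right (ih hml (List.pairwise_cons.1 hp).2) _
    _ ≤ W (a ∪ ⋃ s ∈ l, s) := W_superadd_two hW hma hmu hdis
    _ = W (⋃ s ∈ a :: l, s) := by simp

end St16
end Wsec
section GNsec
namespace St16
variable {d N : ℕ} {W : Set (Fin d → ℝ) → ℝ≥0∞}

lemma Ninv_pos : (0:ℝ≥0∞) < (N:ℝ≥0∞)⁻¹ :=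
  ENNReal.inv_pos.mpr (ENNReal.natCast_ne_top N)

lemma unit_mem_GN (hN : 1 ≤ N) (hW : IsWeight d W) : unitCube d ∈ GN d N W := by
  refine ⟨isDyadic_unitCube, ?_⟩
  rw [hW.2.2]
  exact ENNReal.inv_le_one.mpr (by exact_mod_cast hN)

lemma GN_upclosed (hW : IsWeight d W) {Q Q' : Set (Fin d → ℝ)}
    (hQ : Q ∈ GN d N W) (hQ' : IsDyadicCube d Q') (hsub : Q ⊆ Q') : Q' ∈ GN d N W :=
  ⟨hQ', le_trans hQ.2 (W_mono hW (dmeas_of_dyadic hQ.1) (dmeas_of_dyadic hQ') hsub)⟩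

lemma volume_dcube {j : ℕ} (α : Fin d → ℕ) :
    MeasureTheory.volume (dcube d j α) = ((2:ℝ≥0∞)⁻¹ ^ j) ^ d := by
  rw [dcube, MeasureTheory.volume_pi_pi]
  have hfac : ∀ i : Fin d, MeasureTheory.volume
      (Set.Ico ((α i : ℝ) / 2 ^ j) (((α i : ℝ) + 1) / 2 ^ j)) = (2:ℝ≥0∞)⁻¹ ^ j := by
    intro i
    rw [Real.volume_Ico]
    have h1 : ((α i : ℝ) + 1) / 2 ^ j - (α i : ℝ) / 2 ^ j = (1/2) ^ j := by
      have h2j : (0:ℝ) < 2 ^ j := by positivity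
      field_simp
      rw [← mul_pow]; norm_num
    rw [h1, ENNReal.ofReal_pow (by norm_num)]
    congr 1
    rw [show (1:ℝ)/2 = (2:ℝ)⁻¹ by norm_num, ENNReal.ofReal_inv_of_pos (by norm_num)]
    norm_num
  simp only [hfac, Finset.prod_const, Finset.card_univ, Fintype.card_fin]

lemma GN_finite (hd : 1 ≤ d) (hW : IsWeight d W) : (GN d N W).Finite := by
  obtain ⟨δ, hδ, hε⟩ := hW.2.1 ((N:ℝ≥0∞))⁻¹ Ninv_pos
  obtain ⟨j₀, hj₀⟩ := ENNReal.exists_inv_two_pow_lt (ne_of_gt hδ)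
  have hfin : (⋃ j ∈ Finset.range (j₀ + 1),
      (dcube d j '' {α : Fin d → ℕ | ∀ i, α i < 2 ^ j})).Finite := by
    apply Set.Finite.biUnion (Finset.range (j₀+1)).finite_toSet
    intro j _
    apply Set.Finite.image
    have : {α : Fin d → ℕ | ∀ i, α i < 2 ^ j} = Set.univ.pi fun _ => Set.Iio (2 ^ j) := by
      ext f; simp
    rw [this]
    exact Set.Finite.pi fun _ => Set.finite_Iio _
  apply Set.Finite.subset hfin
  rintro Q ⟨⟨j, α, hα, rfl⟩, hWQ⟩
  have hj : j ≤ j₀ := by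
    by_contra hc
    push_neg at hc
    have hvol : MeasureTheory.volume (dcube d j α) < δ := by
      rw [volume_dcube]
      calc ((2:ℝ≥0∞)⁻¹ ^ j) ^ d = 2⁻¹ ^ (j * d) := by rw [← pow_mul]
      _ ≤ 2⁻¹ ^ j₀ := by
          apply pow_le_pow_of_le_one zero_le ?_ ?_
          · exact ENNReal.inv_le_one.mpr (by norm_num)
          · have := Nat.one_le_iff_ne_zero.1 hd
            nlinarith [hc]
      _ < δ := hj₀
    have := hε _ (dmeas_of_dyadic (isDyadic_dcube hα)) hvol
    exact absurd hWQ (not_le.mpr this)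
  exact Set.mem_biUnion (Finset.mem_range.2 (by omega)) ⟨α, hα, rfl⟩

end St16
end GNsec
section Rec
namespace St16
variable {d N : ℕ} {W : Set (Fin d → ℝ) → ℝ≥0∞}

/-- invariant returned by the recursive path-decomposition -/
def RecOut (d N : ℕ) (W : Set (Fin d → ℝ) → ℝ≥0∞) (R T' : Set (Fin d → ℝ))
    (L : List (Set (Fin d → ℝ) × Set (Fin d → ℝ))) (F : Finset (Set (Fin d → ℝ))) : Prop :=
  (∀ p ∈ (T', R) :: L, IsDyadicCube d p.1 ∧ IsDyadicCube d p.2 ∧ p.1 ⊆ p.2 ∧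
      W (p.2 \ p.1) < (N:ℝ≥0∞)⁻¹) ∧
  ((T', R) :: L).Pairwise
    (fun p q => Disjoint (dyadicPath d p.1 p.2) (dyadicPath d q.1 q.2)) ∧
  (∀ Q, (∃ p ∈ (T', R) :: L, Q ∈ dyadicPath d p.1 p.2) ↔ Q ∈ GN d N W ∧ Q ⊆ R) ∧
  (↑F : Set (Set (Fin d → ℝ))).PairwiseDisjoint id ∧
  (∀ f ∈ F, dmeas d f ∧ (N:ℝ≥0∞)⁻¹ ≤ W f ∧ f ⊆ T') ∧
  L.length + 2 ≤ 2 * F.card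

lemma rec_main (hd : 1 ≤ d) (hN : 1 ≤ N) (hW : IsWeight d W)
    (hfin : (GN d N W).Finite) :
    ∀ n : ℕ, ∀ R, R ∈ GN d N W → ({Q | Q ∈ GN d N W ∧ Q ⊆ R}).ncard ≤ n →
    ∃ T' L F, RecOut d N W R T' L F := by
  intro n
  induction n with
  | zero =>
    intro R hR hcard
    exfalso
    have hfin' : {Q | Q ∈ GN d N W ∧ Q ⊆ R}.Finite := hfin.subset fun Q hQ => hQ.1
    have : R ∈ {Q | Q ∈ GN d N W ∧ Q ⊆ R} := ⟨hR, le_refl _⟩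
    have := Set.ncard_pos hfin' |>.mpr ⟨R, this⟩
    omega
  | succ n ih =>
    intro R hR hcard
    classical
    have hRd : IsDyadicCube d R := hR.1
    -- maximal elements of GR \ {R}
    set C : Set (Set (Fin d → ℝ)) :=
      {c | (c ∈ GN d N W ∧ c ⊆ R) ∧ c ≠ R ∧
        ∀ Q, (Q ∈ GN d N W ∧ Q ⊆ R) → Q ≠ R → c ⊆ Q → c = Q} with hC
    have hCfin : C.Finite := hfin.subset fun c hc => hc.1.1
    have hmax : ∀ Q, (Q ∈ GN d N W ∧ Q ⊆ R) → Q ≠ R → ∃ c ∈ C, Q ⊆ c := by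
      intro Q hQ hne
      set s : Set (Set (Fin d → ℝ)) :=
        {Q' | (Q' ∈ GN d N W ∧ Q' ⊆ R) ∧ Q' ≠ R ∧ Q ⊆ Q'} with hs
      have hsfin : s.Finite := hfin.subset fun Q' hQ' => hQ'.1.1
      obtain ⟨c, hcs, hcmax⟩ := Set.Finite.exists_maximalFor id s hsfin
        ⟨Q, hQ, hne, le_refl _⟩
      refine ⟨c, ⟨hcs.1, hcs.2.1, ?_⟩, hcs.2.2⟩
      intro Q' hQ' hQ'ne hcQ'
      exact le_antisymm hcQ' (hcmax ⟨hQ', hQ'ne, le_trans hcs.2.2 hcQ'⟩ hcQ')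
    have hCdisj : ∀ c ∈ C, ∀ c' ∈ C, c ≠ c' → Disjoint c c' := by
      intro c hc c' hc' hne
      rw [Set.disjoint_iff_inter_eq_empty]
      by_contra hcc
      rcases dyadic_laminar hc.1.1.1 hc'.1.1.1
        (Set.nonempty_iff_ne_empty.2 hcc) with h | h
      · exact hne (hc.2.2 c' hc'.1 hc'.2.1 h)
      · exact hne (hc'.2.2 c hc.1 hc.2.1 h).symm
    rcases Set.eq_empty_or_nonempty C with hCem | hCne
    · -- leaf case : GR = {R}
      have hGR : {Q | Q ∈ GN d N W ∧ Q ⊆ R} = {R} := by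
        apply Set.Subset.antisymm
        · intro Q hQ
          by_contra hne
          obtain ⟨c, hc, -⟩ := hmax Q hQ hne
          exact absurd hc (by rw [hCem]; exact Set.notMem_empty c)
        · intro Q hQ; rw [Set.mem_singleton_iff] at hQ; subst hQ; exact ⟨hR, le_refl _⟩
      refine ⟨R, [], {R}, ?_, ?_, ?_, ?_, ?_, ?_⟩
      · rintro p hp
        simp only [List.mem_singleton] at hp
        subst hp
        refine ⟨hRd, hRd, le_refl _, ?_⟩
        rw [Set.diff_self, W_empty hW]
        exact Ninv_pos
      · simp
      · intro Q
        constructor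
        · rintro ⟨p, hp, hQp⟩
          simp only [List.mem_singleton] at hp
          subst hp
          rw [dyadicPath_self hRd] at hQp
          rw [hQp]; exact ⟨hR, le_refl _⟩
        · intro hQ
          have : Q = R := by
            have := hGR ▸ (show Q ∈ {Q | Q ∈ GN d N W ∧ Q ⊆ R} from hQ)
            exact this
          refine ⟨(R, R), List.mem_singleton.2 rfl, ?_⟩
          rw [this]
          exact mem_dyadicPath_self hRd (le_refl _)
      · simp
      · intro f hf
        simp only [Finset.mem_singleton] at hf
        subst hf
        exact ⟨dmeas_of_dyadic hRd, hR.2, le_refl _⟩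
      · simp
    · -- C nonempty
      set CF : Finset (Set (Fin d → ℝ)) := hCfin.toFinset with hCF
      have hmemCF : ∀ c, c ∈ CF ↔ c ∈ C := fun c => hCfin.mem_toFinset
      have hC_G : ∀ c ∈ C, c ∈ GN d N W := fun c hc => hc.1.1
      have hC_sub : ∀ c ∈ C, c ⊆ R := fun c hc => hc.1.2
      have hC_ne : ∀ c ∈ C, c ≠ R := fun c hc => hc.2.1
      have hccard : ∀ c ∈ C, ({Q | Q ∈ GN d N W ∧ Q ⊆ c}).ncard ≤ n := by
        intro c hc
        have hsub : {Q | Q ∈ GN d N W ∧ Q ⊆ c} ⊆ {Q | Q ∈ GN d N W ∧ Q ⊆ R} :=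
          fun Q hQ => ⟨hQ.1, le_trans hQ.2 (hC_sub c hc)⟩
        have hss : {Q | Q ∈ GN d N W ∧ Q ⊆ c} ⊂ {Q | Q ∈ GN d N W ∧ Q ⊆ R} := by
          refine ⟨hsub, fun hcon => ?_⟩
          have hRc : R ∈ {Q | Q ∈ GN d N W ∧ Q ⊆ c} := hcon ⟨hR, le_refl _⟩
          exact hC_ne c hc (le_antisymm (hC_sub c hc) hRc.2)
        have hlt := Set.ncard_lt_ncard hss (hfin.subset fun Q hQ => hQ.1)
        omega
      have hrec0 : ∀ c : {c // c ∈ CF}, ∃ T' L F, RecOut d N W c.1 T' L F := by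
        rintro ⟨c, hc⟩
        have hcC := (hmemCF c).1 hc
        exact ih c (hC_G c hcC) (hccard c hcC)
      choose fT fL fF hrec using hrec0
      have hprops := fun c => (hrec c).1
      have hpair := fun c => (hrec c).2.1
      have hunion := fun c => (hrec c).2.2.1
      have hFdisj := fun c => (hrec c).2.2.2.1
      have hFprops := fun c => (hrec c).2.2.2.2.1
      have hFcount := fun c => (hrec c).2.2.2.2.2
      have hfTd : ∀ c, IsDyadicCube d (fT c) :=
        fun c => (hprops c _ (List.mem_cons_self)).1
      have hfTsub : ∀ c, fT c ⊆ c.1 :=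
        fun c => (hprops c _ (List.mem_cons_self)).2.2.1
      have hfT_G : ∀ c, fT c ∈ GN d N W :=
        fun c => (((hunion c) (fT c)).1 ⟨(fT c, c.1), List.mem_cons_self,
          mem_dyadicPath_self (hfTd c) (hfTsub c)⟩).1
      have hcC' : ∀ c : {c // c ∈ CF}, c.1 ∈ C := fun c => (hmemCF _).1 c.2
      have hval_ne : ∀ c c' : {c // c ∈ CF}, c ≠ c' → c.1 ≠ c'.1 :=
        fun c c' hne h => hne (Subtype.ext h)
      have hcube_disj : ∀ c c' : {c // c ∈ CF}, c ≠ c' → Disjoint c.1 c'.1 :=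
        fun c c' hne => hCdisj c.1 (hcC' c) c'.1 (hcC' c') (hval_ne c c' hne)
      have hQin : ∀ (c : {c // c ∈ CF}) p, p ∈ (fT c, c.1) :: fL c →
          ∀ Q, Q ∈ dyadicPath d p.1 p.2 → Q ∈ GN d N W ∧ Q ⊆ c.1 :=
        fun c p hp Q hQ => ((hunion c) Q).1 ⟨p, hp, hQ⟩
      set Lall : List (Set (Fin d → ℝ) × Set (Fin d → ℝ)) :=
        CF.attach.toList.flatMap (fun c => (fT c, c.1) :: fL c) with hLall
      have hLall_props : ∀ p ∈ Lall, IsDyadicCube d p.1 ∧ IsDyadicCube d p.2 ∧ p.1 ⊆ p.2 ∧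
          W (p.2 \ p.1) < (N:ℝ≥0∞)⁻¹ := by
        intro p hp
        rw [hLall, List.mem_flatMap] at hp
        obtain ⟨c, -, hpc⟩ := hp
        exact hprops c p hpc
      have hLall_pair : Lall.Pairwise
          (fun p q => Disjoint (dyadicPath d p.1 p.2) (dyadicPath d q.1 q.2)) := by
        rw [hLall, List.pairwise_flatMap]
        refine ⟨fun c _ => hpair c, ?_⟩
        refine List.Pairwise.imp ?_ (Finset.nodup_toList CF.attach)
        intro c c' hne p hp q hq
        rw [Set.disjoint_left]
        intro Q hQp hQq
        have h1 := hQin c p hp Q hQp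
        have h2 := hQin c' q hq Q hQq
        obtain ⟨x, hx⟩ := dyadic_nonempty h1.1.1
        exact (Set.disjoint_left.1 (hcube_disj c c' hne) (h1.2 hx)) (h2.2 hx)
      have hLall_union : ∀ Q, (∃ p ∈ Lall, Q ∈ dyadicPath d p.1 p.2) ↔
          (Q ∈ GN d N W ∧ Q ⊆ R) ∧ Q ≠ R := by
        intro Q
        constructor
        · rintro ⟨p, hp, hQp⟩
          rw [hLall, List.mem_flatMap] at hp
          obtain ⟨c, -, hpc⟩ := hp
          obtain ⟨hQG, hQc⟩ := hQin c p hpc Q hQp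
          refine ⟨⟨hQG, le_trans hQc (hC_sub _ (hcC' c))⟩, ?_⟩
          rintro rfl
          exact hC_ne _ (hcC' c) (le_antisymm (hC_sub _ (hcC' c)) hQc)
        · rintro ⟨hQ, hne⟩
          obtain ⟨c, hcmem, hQc⟩ := hmax Q hQ hne
          have hcCF : c ∈ CF := (hmemCF c).2 hcmem
          obtain ⟨p, hp, hQp⟩ := ((hunion ⟨c, hcCF⟩) Q).2 ⟨hQ.1, hQc⟩
          refine ⟨p, ?_, hQp⟩
          rw [hLall, List.mem_flatMap]
          exact ⟨⟨c, hcCF⟩, Finset.mem_toList.2 (Finset.mem_attach _ _), hp⟩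
      set Fall : Finset (Set (Fin d → ℝ)) := CF.attach.biUnion (fun c => fF c) with hFall
      have hfne : ∀ (c : {c // c ∈ CF}) f, f ∈ fF c → f ≠ ∅ := by
        intro c f hf hfe
        have hle := (hFprops c f hf).2.1
        rw [hfe, W_empty hW] at hle
        exact absurd hle (not_le.mpr Ninv_pos)
      have hfsubc : ∀ (c : {c // c ∈ CF}) f, f ∈ fF c → f ⊆ c.1 :=
        fun c f hf => le_trans (hFprops c f hf).2.2 (hfTsub c)
      have hFall_disj : (↑Fall : Set (Set (Fin d → ℝ))).PairwiseDisjoint id := by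
        intro f hf g hg hne
        rw [Finset.mem_coe, hFall, Finset.mem_biUnion] at hf hg
        obtain ⟨c, -, hfc⟩ := hf
        obtain ⟨c', -, hgc⟩ := hg
        by_cases hcc : c = c'
        · subst hcc
          exact hFdisj c (Finset.mem_coe.2 hfc) (Finset.mem_coe.2 hgc) hne
        · exact Set.disjoint_of_subset (hfsubc c f hfc) (hfsubc c' g hgc)
            (hcube_disj c c' hcc)
      have hFall_props : ∀ f ∈ Fall, dmeas d f ∧ (N:ℝ≥0∞)⁻¹ ≤ W f ∧ f ⊆ R := by
        intro f hf
        rw [hFall, Finset.mem_biUnion] at hf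
        obtain ⟨c, -, hfc⟩ := hf
        exact ⟨(hFprops c f hfc).1, (hFprops c f hfc).2.1,
          le_trans (hfsubc c f hfc) (hC_sub _ (hcC' c))⟩
      have hdF : ∀ c ∈ CF.attach, ∀ c' ∈ CF.attach, c ≠ c' → Disjoint (fF c) (fF c') := by
        intro c _ c' _ hne
        rw [Finset.disjoint_left]
        intro f hfc hfc'
        obtain ⟨x, hx⟩ := Set.nonempty_iff_ne_empty.2 (hfne c f hfc)
        exact (Set.disjoint_left.1 (hcube_disj c c' hne) (hfsubc c f hfc hx))
          (hfsubc c' f hfc' hx)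
      have hFall_card : Fall.card = ∑ c ∈ CF.attach, (fF c).card := Finset.card_biUnion hdF
      have hLall_len : Lall.length = ∑ c ∈ CF.attach, ((fL c).length + 1) := by
        rw [hLall, List.length_flatMap]
        rw [show (List.map (fun c => ((fT c, c.1) :: fL c).length) CF.attach.toList)
          = (List.map (fun c => (fL c).length + 1) CF.attach.toList) by
            apply List.map_congr_left; intro c _; simp]
        exact Finset.sum_map_toList _ _
      have hcount_all : Lall.length + CF.card ≤ 2 * Fall.card := by
        calc Lall.length + CF.card
            = (∑ c ∈ CF.attach, ((fL c).length + 1)) + ∑ _c ∈ CF.attach, 1 := by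
              rw [hLall_len, Finset.sum_const, smul_eq_mul, mul_one, Finset.card_attach]
          _ = ∑ c ∈ CF.attach, ((fL c).length + 1 + 1) := (Finset.sum_add_distrib).symm
          _ ≤ ∑ c ∈ CF.attach, 2 * (fF c).card :=
              Finset.sum_le_sum (fun c _ => by have := hFcount c; omega)
          _ = 2 * ∑ c ∈ CF.attach, (fF c).card := (Finset.mul_sum _ _ _).symm
          _ = 2 * Fall.card := by rw [hFall_card]
      -- case split
      by_cases hext : ∃ c₀ : {c // c ∈ CF}, CF = {c₀.1} ∧ W (R \ fT c₀) < (N:ℝ≥0∞)⁻¹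
      · -- extend the single chain through R
        obtain ⟨c₀, hCF1, hWext⟩ := hext
        have honly : ∀ c ∈ C, c = c₀.1 := by
          intro c hc
          have := (hmemCF c).2 hc
          rw [hCF1, Finset.mem_singleton] at this
          exact this
        have hTR : fT c₀ ⊆ R := le_trans (hfTsub c₀) (hC_sub _ (hcC' c₀))
        have hkey : dyadicPath d (fT c₀) R = dyadicPath d (fT c₀) c₀.1 ∪ {R} := by
          apply Set.Subset.antisymm
          · rintro Q ⟨hQd, hTQ, hQR⟩
            by_cases hQRe : Q = R
            · exact Or.inr hQRe
            · have hQG : Q ∈ GN d N W := GN_upclosed hW (hfT_G c₀) hQd hTQ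
              obtain ⟨c, hc, hQc⟩ := hmax Q ⟨hQG, hQR⟩ hQRe
              rw [honly c hc] at hQc
              exact Or.inl ⟨hQd, hTQ, hQc⟩
          · rintro Q (⟨hQd, hTQ, hQc⟩ | hQR)
            · exact ⟨hQd, hTQ, le_trans hQc (hC_sub _ (hcC' c₀))⟩
            · rw [Set.mem_singleton_iff] at hQR
              subst hQR
              exact ⟨hRd, hTR, le_refl _⟩
        have hRnot : ∀ q ∈ fL c₀, R ∉ dyadicPath d q.1 q.2 := by
          intro q hq hRq
          have := (hQin c₀ q (List.mem_cons_of_mem _ hq) R hRq).2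
          exact hC_ne _ (hcC' c₀) (le_antisymm (hC_sub _ (hcC' c₀)) this)
        refine ⟨fT c₀, fL c₀, fF c₀, ?_, ?_, ?_, hFdisj c₀, hFprops c₀, hFcount c₀⟩
        · rintro p hp
          rcases List.mem_cons.1 hp with hp | hp
          · subst hp
            exact ⟨hfTd c₀, hRd, hTR, hWext⟩
          · exact hprops c₀ p (List.mem_cons_of_mem _ hp)
        · rw [List.pairwise_cons]
          refine ⟨?_, (List.pairwise_cons.1 (hpair c₀)).2⟩
          intro q hq
          show Disjoint (dyadicPath d (fT c₀) R) (dyadicPath d q.1 q.2)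
          rw [hkey, Set.disjoint_union_left]
          exact ⟨(List.pairwise_cons.1 (hpair c₀)).1 q hq,
            Set.disjoint_singleton_left.2 (hRnot q hq)⟩
        · intro Q
          constructor
          · rintro ⟨p, hp, hQp⟩
            rcases List.mem_cons.1 hp with hp | hp
            · subst hp
              rcases (hkey ▸ hQp) with h | h
              · have := hQin c₀ _ (List.mem_cons_self) Q h
                exact ⟨this.1, le_trans this.2 (hC_sub _ (hcC' c₀))⟩
              · rw [Set.mem_singleton_iff] at h
                subst h
                exact ⟨hR, le_refl _⟩
            · have := hQin c₀ p (List.mem_cons_of_mem _ hp) Q hQp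
              exact ⟨this.1, le_trans this.2 (hC_sub _ (hcC' c₀))⟩
          · rintro ⟨hQG, hQR⟩
            by_cases hQRe : Q = R
            · subst hQRe
              exact ⟨(fT c₀, Q), List.mem_cons_self, hRd, hTR, le_refl _⟩
            · obtain ⟨c, hc, hQc⟩ := hmax Q ⟨hQG, hQR⟩ hQRe
              rw [honly c hc] at hQc
              obtain ⟨p, hp, hQp⟩ := ((hunion c₀) Q).2 ⟨hQG, hQc⟩
              rcases List.mem_cons.1 hp with hp | hp
              · subst hp
                exact ⟨(fT c₀, R), List.mem_cons_self, hkey ▸ Or.inl hQp⟩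
              · exact ⟨p, List.mem_cons_of_mem _ hp, hQp⟩
      · -- cut / branch : new top piece [R,R]
        have hRpath : dyadicPath d R R = {R} := dyadicPath_self hRd
        have hbig_props : ∀ p ∈ ((R, R) :: Lall), IsDyadicCube d p.1 ∧ IsDyadicCube d p.2 ∧
            p.1 ⊆ p.2 ∧ W (p.2 \ p.1) < (N:ℝ≥0∞)⁻¹ := by
          rintro p hp
          rcases List.mem_cons.1 hp with hp | hp
          · subst hp
            refine ⟨hRd, hRd, le_refl _, ?_⟩
            rw [Set.diff_self, W_empty hW]
            exact Ninv_pos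
          · exact hLall_props p hp
        have hbig_pair : ((R, R) :: Lall).Pairwise
            (fun p q => Disjoint (dyadicPath d p.1 p.2) (dyadicPath d q.1 q.2)) := by
          rw [List.pairwise_cons]
          refine ⟨?_, hLall_pair⟩
          intro q hq
          show Disjoint (dyadicPath d R R) (dyadicPath d q.1 q.2)
          rw [hRpath, Set.disjoint_singleton_left]
          intro hRq
          exact ((hLall_union R).1 ⟨q, hq, hRq⟩).2 rfl
        have hbig_union : ∀ Q, (∃ p ∈ (R, R) :: Lall, Q ∈ dyadicPath d p.1 p.2) ↔
            Q ∈ GN d N W ∧ Q ⊆ R := by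
          intro Q
          constructor
          · rintro ⟨p, hp, hQp⟩
            rcases List.mem_cons.1 hp with hp | hp
            · subst hp
              rw [hRpath, Set.mem_singleton_iff] at hQp
              subst hQp
              exact ⟨hR, le_refl _⟩
            · exact ((hLall_union Q).1 ⟨p, hp, hQp⟩).1
          · intro hQ
            by_cases hQRe : Q = R
            · subst hQRe
              exact ⟨(Q, Q), List.mem_cons_self, mem_dyadicPath_self hRd (le_refl _)⟩
            · obtain ⟨p, hp, hQp⟩ := (hLall_union Q).2 ⟨hQ, hQRe⟩
              exact ⟨p, List.mem_cons_of_mem _ hp, hQp⟩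
        by_cases hone : ∃ c₀ : {c // c ∈ CF}, CF = {c₀.1}
        · -- single child, forced cut
          obtain ⟨c₀, hCF1⟩ := hone
          have hWcut : (N:ℝ≥0∞)⁻¹ ≤ W (R \ fT c₀) := by
            by_contra h
            push_neg at h
            exact hext ⟨c₀, hCF1, h⟩
          have hcut_ne : R \ fT c₀ ≠ ∅ := by
            intro h
            rw [h, W_empty hW] at hWcut
            exact absurd hWcut (not_le.mpr Ninv_pos)
          have honly' : ∀ x ∈ CF, x = c₀.1 := fun x hx => by
            rw [hCF1] at hx; exact Finset.mem_singleton.1 hx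
          have hnotmem : R \ fT c₀ ∉ Fall := by
            intro hmem
            rw [hFall, Finset.mem_biUnion] at hmem
            obtain ⟨c, -, hfc⟩ := hmem
            have hcc : c = c₀ := Subtype.ext (honly' c.1 c.2)
            have hsubf := (hFprops c _ hfc).2.2
            rw [hcc] at hsubf
            obtain ⟨x, hx⟩ := Set.nonempty_iff_ne_empty.2 hcut_ne
            exact hx.2 (hsubf hx)
          refine ⟨R, Lall, insert (R \ fT c₀) Fall, hbig_props, hbig_pair, hbig_union,
            ?_, ?_, ?_⟩
          · rw [Finset.coe_insert]
            apply Set.PairwiseDisjoint.insert hFall_disj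
            intro g hg hne
            have hgsub : g ⊆ fT c₀ := by
              rw [Finset.mem_coe, hFall, Finset.mem_biUnion] at hg
              obtain ⟨c, -, hgc⟩ := hg
              have hcc : c = c₀ := Subtype.ext (honly' c.1 c.2)
              have := (hFprops c g hgc).2.2
              rwa [hcc] at this
            exact Set.disjoint_of_subset_right hgsub disjoint_sdiff_self_left
          · intro f hf
            rcases Finset.mem_insert.1 hf with hf | hf
            · subst hf
              exact ⟨MeasurableSet.diff (dmeas_of_dyadic hRd) (dmeas_of_dyadic (hfTd c₀)),
                hWcut, Set.diff_subset⟩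
            · exact hFall_props f hf
          · rw [Finset.card_insert_of_notMem hnotmem]
            have hc1 : CF.card = 1 := by rw [hCF1]; exact Finset.card_singleton _
            omega
        · -- at least two children
          have h2 : 2 ≤ CF.card := by
            have h1 : 1 ≤ CF.card := Finset.card_pos.2 (by
              obtain ⟨c, hc⟩ := hCne
              exact ⟨c, (hmemCF c).2 hc⟩)
            rcases Nat.lt_or_ge CF.card 2 with h | h
            · exfalso
              have hcard1 : CF.card = 1 := by omega
              obtain ⟨a, ha⟩ := Finset.card_eq_one.1 hcard1
              exact hone ⟨⟨a, by rw [ha]; exact Finset.mem_singleton_self a⟩, ha⟩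
            · exact h
          exact ⟨R, Lall, Fall, hbig_props, hbig_pair, hbig_union, hFall_disj,
            fun f hf => hFall_props f hf, by omega⟩

end St16
end Rec
open St16 in
/-- Proposition 4.3 / II.2, output of the algorithm: for a weight
`W` and `N ∈ ℕ`, the set `G_N = {Q dyadic : W(Q) ≥ 1/N}` is finite and
`G_N ∖ {[0,1)^d}` can be partitioned into at most `3N + 1` paths `B = [T_B, H_B]`
of the dyadic tree with `W(H_B ∖ T_B) < 1/N` for each. -/
theorem statement16 (d N : ℕ) (hd : 1 ≤ d) (hN : 1 ≤ N)
    (W : Set (Fin d → ℝ) → ℝ≥0∞) (hW : IsWeight d W) :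
    (GN d N W).Finite ∧
    ∃ (m : ℕ) (T H : Fin m → Set (Fin d → ℝ)),
      (∀ i, IsDyadicCube d (T i)) ∧
      (∀ i, IsDyadicCube d (H i)) ∧
      (∀ i, T i ⊆ H i) ∧
      (Set.univ : Set (Fin m)).PairwiseDisjoint
        (fun i => dyadicPath d (T i) (H i)) ∧
      (⋃ i, dyadicPath d (T i) (H i)) = GN d N W \ {unitCube d} ∧
      (∀ i, W (H i \ T i) < ((N : ℝ≥0∞))⁻¹) ∧
      m ≤ 3 * N + 1 := by
  classical
  have hGNfin : (GN d N W).Finite := GN_finite hd hW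
  refine ⟨hGNfin, ?_⟩
  have hu : unitCube d ∈ GN d N W := unit_mem_GN hN hW
  obtain ⟨T', L, F, hprops, hpair, hunion, hFdisj, hFprops, hcount⟩ :=
    rec_main hd hN hW hGNfin ({Q | Q ∈ GN d N W ∧ Q ⊆ unitCube d}).ncard
      (unitCube d) hu (le_refl _)
  have hT'd : IsDyadicCube d T' := (hprops _ (List.mem_cons_self)).1
  have hT'sub : T' ⊆ unitCube d := (hprops _ (List.mem_cons_self)).2.2.1
  -- |F| ≤ N
  have hFcard : F.card ≤ N := by
    have hlp : F.toList.Pairwise Disjoint := by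
      refine List.Pairwise.imp_of_mem ?_ (Finset.nodup_toList F)
      intro a b ha hb hne
      exact hFdisj (Finset.mem_coe.2 (Finset.mem_toList.1 ha))
        (Finset.mem_coe.2 (Finset.mem_toList.1 hb)) hne
    have hmeas : ∀ s ∈ F.toList, dmeas d s :=
      fun s hs => (hFprops s (Finset.mem_toList.1 hs)).1
    have h1 := W_superadd_list hW F.toList hmeas hlp
    rw [Finset.sum_map_toList F W] at h1
    have h3 : (F.card : ℝ≥0∞) * (N:ℝ≥0∞)⁻¹ ≤ ∑ f ∈ F, W f := by
      calc (F.card : ℝ≥0∞) * (N:ℝ≥0∞)⁻¹ = ∑ _f ∈ F, (N:ℝ≥0∞)⁻¹ := by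
            rw [Finset.sum_const, nsmul_eq_mul]
        _ ≤ ∑ f ∈ F, W f := Finset.sum_le_sum fun f hf => (hFprops f hf).2.1
    have hsub : (⋃ s ∈ F.toList, s) ⊆ unitCube d := by
      intro x hx
      rw [Set.mem_iUnion₂] at hx
      obtain ⟨s, hs, hxs⟩ := hx
      exact hT'sub ((hFprops s (Finset.mem_toList.1 hs)).2.2 hxs)
    have hmu : dmeas d (⋃ s ∈ F.toList, s) :=
      MeasurableSet.biUnion (F.toList.finite_toSet.countable) (fun s hs => hmeas s hs)
    have h4 : W (⋃ s ∈ F.toList, s) ≤ 1 := by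
      rw [← hW.2.2]
      exact W_mono hW hmu dmeas_unit hsub
    have h5 : (F.card : ℝ≥0∞) * (N:ℝ≥0∞)⁻¹ ≤ 1 := le_trans h3 (le_trans h1 h4)
    have hN0 : (N:ℝ≥0∞) ≠ 0 := by
      simp only [ne_eq, Nat.cast_eq_zero]
      omega
    have hNt : (N:ℝ≥0∞) ≠ ⊤ := ENNReal.natCast_ne_top N
    have hle : (F.card : ℝ≥0∞) ≤ N := by
      calc (F.card : ℝ≥0∞) = F.card * ((N:ℝ≥0∞)⁻¹ * N) := by
            rw [ENNReal.inv_mul_cancel hN0 hNt, mul_one]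
        _ = F.card * (N:ℝ≥0∞)⁻¹ * N := by ring
        _ ≤ 1 * N := mul_le_mul_left h5 _
        _ = N := one_mul _
    exact_mod_cast hle
  have hucap : unitCube d ∈ dyadicPath d T' (unitCube d) :=
    ⟨isDyadic_unitCube, hT'sub, le_refl _⟩
  have hunit_notin : ∀ p ∈ L, unitCube d ∉ dyadicPath d p.1 p.2 :=
    fun p hp hmem => Set.disjoint_left.1 ((List.pairwise_cons.1 hpair).1 p hp) hucap hmem
  obtain ⟨L2, hprops2, hpair2, hunion2, hlen2⟩ :
      ∃ L2 : List (Set (Fin d → ℝ) × Set (Fin d → ℝ)),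
        (∀ p ∈ L2, IsDyadicCube d p.1 ∧ IsDyadicCube d p.2 ∧ p.1 ⊆ p.2 ∧
          W (p.2 \ p.1) < (N:ℝ≥0∞)⁻¹) ∧
        L2.Pairwise (fun p q => Disjoint (dyadicPath d p.1 p.2) (dyadicPath d q.1 q.2)) ∧
        (∀ Q, (∃ p ∈ L2, Q ∈ dyadicPath d p.1 p.2) ↔ Q ∈ GN d N W ∧ Q ≠ unitCube d) ∧
        L2.length ≤ 3 * N + 1 := by
    by_cases hTu : T' = unitCube d
    · refine ⟨L, fun p hp => hprops p (List.mem_cons_of_mem _ hp),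
        (List.pairwise_cons.1 hpair).2, ?_, by omega⟩
      intro Q
      constructor
      · rintro ⟨p, hp, hQp⟩
        refine ⟨((hunion Q).1 ⟨p, List.mem_cons_of_mem _ hp, hQp⟩).1, ?_⟩
        rintro rfl
        exact hunit_notin p hp hQp
      · rintro ⟨hQ, hne⟩
        obtain ⟨p, hp, hQp⟩ := (hunion Q).2 ⟨hQ, dyadic_subset_unit hQ.1⟩
        rcases List.mem_cons.1 hp with hp | hp
        · exfalso
          subst hp
          rw [hTu, dyadicPath_self isDyadic_unitCube] at hQp
          exact hne hQp
        · exact ⟨p, hp, hQp⟩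
    · obtain ⟨H', hH'd, hTH', hH'ne, hH'max⟩ := exists_anc1 hd hT'd hTu
      have hH'sub : H' ⊆ unitCube d := dyadic_subset_unit hH'd
      have hpatheq : dyadicPath d T' H' =
          dyadicPath d T' (unitCube d) \ {unitCube d} := by
        ext Q
        constructor
        · rintro ⟨hQd, hTQ, hQH⟩
          refine ⟨⟨hQd, hTQ, le_trans hQH hH'sub⟩, ?_⟩
          intro hQu
          rw [Set.mem_singleton_iff] at hQu
          subst hQu
          exact hH'ne (le_antisymm hH'sub hQH)
        · rintro ⟨⟨hQd, hTQ, hQu⟩, hne⟩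
          rw [Set.mem_singleton_iff] at hne
          rcases hH'max Q hQd hTQ with h | h
          · exact absurd h hne
          · exact ⟨hQd, hTQ, h⟩
      refine ⟨(T', H') :: L, ?_, ?_, ?_, by simp only [List.length_cons]; omega⟩
      · rintro p hp
        rcases List.mem_cons.1 hp with hp | hp
        · subst hp
          refine ⟨hT'd, hH'd, hTH', ?_⟩
          have hWtop : W (unitCube d \ T') < (N:ℝ≥0∞)⁻¹ :=
            (hprops _ (List.mem_cons_self)).2.2.2
          refine lt_of_le_of_lt (W_mono hW ?_ ?_ ?_) hWtop
          · exact MeasurableSet.diff (dmeas_of_dyadic hH'd) (dmeas_of_dyadic hT'd)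
          · exact MeasurableSet.diff dmeas_unit (dmeas_of_dyadic hT'd)
          · exact Set.diff_subset_diff_left hH'sub
        · exact hprops p (List.mem_cons_of_mem _ hp)
      · rw [List.pairwise_cons]
        refine ⟨?_, (List.pairwise_cons.1 hpair).2⟩
        intro q hq
        refine Set.disjoint_of_subset_left ?_ ((List.pairwise_cons.1 hpair).1 q hq)
        rw [hpatheq]
        exact Set.diff_subset
      · intro Q
        constructor
        · rintro ⟨p, hp, hQp⟩
          rcases List.mem_cons.1 hp with hp | hp
          · subst hp
            rw [hpatheq] at hQp
            refine ⟨((hunion Q).1 ⟨(T', unitCube d),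
              List.mem_cons_self, hQp.1⟩).1, ?_⟩
            simpa using hQp.2
          · refine ⟨((hunion Q).1 ⟨p, List.mem_cons_of_mem _ hp, hQp⟩).1, ?_⟩
            rintro rfl
            exact hunit_notin p hp hQp
        · rintro ⟨hQ, hne⟩
          obtain ⟨p, hp, hQp⟩ := (hunion Q).2 ⟨hQ, dyadic_subset_unit hQ.1⟩
          rcases List.mem_cons.1 hp with hp | hp
          · subst hp
            refine ⟨(T', H'), List.mem_cons_self, ?_⟩
            rw [hpatheq]
            exact ⟨hQp, by simpa using hne⟩
          · exact ⟨p, List.mem_cons_of_mem _ hp, hQp⟩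
  refine ⟨L2.length, fun i => (L2.get i).1, fun i => (L2.get i).2,
    fun i => (hprops2 _ (List.get_mem _ _)).1,
    fun i => (hprops2 _ (List.get_mem _ _)).2.1,
    fun i => (hprops2 _ (List.get_mem _ _)).2.2.1,
    ?_, ?_,
    fun i => (hprops2 _ (List.get_mem _ _)).2.2.2,
    hlen2⟩
  · intro i _ j _ hij
    rcases lt_or_gt_of_ne hij with h | h
    · exact List.pairwise_iff_get.1 hpair2 i j h
    · exact (List.pairwise_iff_get.1 hpair2 j i h).symm
  · ext Q
    simp only [Set.mem_iUnion, Set.mem_diff, Set.mem_singleton_iff]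
    constructor
    · rintro ⟨i, hQi⟩
      exact (hunion2 Q).1 ⟨L2.get i, List.get_mem _ _, hQi⟩
    · intro hQ
      obtain ⟨p, hp, hQp⟩ := (hunion2 Q).2 hQ
      obtain ⟨i, rfl⟩ := List.mem_iff_get.1 hp
      exact ⟨i, hQp⟩
end
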